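/- arXiv:2306.06660 — 4 statements merged into one kernel-verified Lean document; each statement's English description precedes it below -/
import Mathlib

section
/- For every z ∈ ℂ, the function φ_{0,1}(it, z) tends to e^{−2πiz} + 10 + e^{2πiz} as the real parameter t tends to +∞; that is, the q⁰-coefficient of the Fourier expansion of φ_{0,1} is y⁻¹ + 10 + y. -/
open Complex Filter Topology

/-- The Jacobi theta function θ₁. -/
noncomputable def theta1 (τ z : ℂ) : ℂ :=
  -Complex.I * ∑' n : ℤ, (-1 : ℂ) ^ n *
    Complex.exp (Real.pi * Complex.I * ((n : ℂ) + 1 / 2) ^ 2 * τ) *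
    Complex.exp (2 * Real.pi * Complex.I * ((n : ℂ) + 1 / 2) * z)

/-- The Jacobi theta function θ₂. -/
noncomputable def theta2 (τ z : ℂ) : ℂ :=
  ∑' n : ℤ, Complex.exp (Real.pi * Complex.I * ((n : ℂ) + 1 / 2) ^ 2 * τ) *
    Complex.exp (2 * Real.pi * Complex.I * ((n : ℂ) + 1 / 2) * z)

/-- The Jacobi theta function θ₃. -/
noncomputable def theta3 (τ z : ℂ) : ℂ :=
  ∑' n : ℤ, Complex.exp (Real.pi * Complex.I * (n : ℂ) ^ 2 * τ) *
    Complex.exp (2 * Real.pi * Complex.I * (n : ℂ) * z)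

/-- The Jacobi theta function θ₄. -/
noncomputable def theta4 (τ z : ℂ) : ℂ :=
  ∑' n : ℤ, (-1 : ℂ) ^ n * Complex.exp (Real.pi * Complex.I * (n : ℂ) ^ 2 * τ) *
    Complex.exp (2 * Real.pi * Complex.I * (n : ℂ) * z)

/-- The Dedekind eta function. -/
noncomputable def dedekindEta (τ : ℂ) : ℂ :=
  Complex.exp (Real.pi * Complex.I * τ / 12) *
    ∏' n : ℕ, (1 - Complex.exp (2 * Real.pi * Complex.I * ((n : ℂ) + 1) * τ))

/-- The weak Jacobi form φ_{0,1}. -/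
noncomputable def phi01 (τ z : ℂ) : ℂ :=
  4 * ((theta2 τ z / theta2 τ 0) ^ 2 + (theta3 τ z / theta3 τ 0) ^ 2 +
    (theta4 τ z / theta4 τ 0) ^ 2)

/-- The weak Jacobi form φ_{-2,1}. -/
noncomputable def phim21 (τ z : ℂ) : ℂ := -theta1 τ z ^ 2 / dedekindEta τ ^ 6

/-- The normalized Eisenstein series E₄. -/
noncomputable def E4 (τ : ℂ) : ℂ :=
  1 + 240 * ∑' n : ℕ, (∑ d ∈ (n + 1).divisors, (d : ℂ) ^ 3) *
    Complex.exp (2 * Real.pi * Complex.I * ((n : ℂ) + 1) * τ)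

/-- The normalized Eisenstein series E₆. -/
noncomputable def E6 (τ : ℂ) : ℂ :=
  1 - 504 * ∑' n : ℕ, (∑ d ∈ (n + 1).divisors, (d : ℂ) ^ 5) *
    Complex.exp (2 * Real.pi * Complex.I * ((n : ℂ) + 1) * τ)

/-- `IsWeakJacobiForm k M φ` means that `φ : ℂ → ℂ → ℂ` (viewed as a function of
`(τ, z)` on the domain `{τ : 0 < Im τ} × ℂ`) is a weak Jacobi form of weight `k`
and index `M / 2` (so `M` is twice the index, which is allowed to be half-integral):
it is holomorphic, satisfies the modular and elliptic transformation laws, and has a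
Fourier expansion `∑_{n ≥ 0} ∑_{r ∈ ℤ + M/2} c n r q^n y^r` with only
nonnegative powers of `q`. -/
def IsWeakJacobiForm (k M : ℤ) (φ : ℂ → ℂ → ℂ) : Prop :=
  DifferentiableOn ℂ (fun p : ℂ × ℂ => φ p.1 p.2) {p : ℂ × ℂ | 0 < p.1.im} ∧
  (∀ γ : Matrix.SpecialLinearGroup (Fin 2) ℤ, ∀ τ z : ℂ, 0 < τ.im →
    φ ((γ 0 0 * τ + γ 0 1) / (γ 1 0 * τ + γ 1 1)) (z / (γ 1 0 * τ + γ 1 1)) =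
      (γ 1 0 * τ + γ 1 1) ^ k *
        Complex.exp (Real.pi * Complex.I * M * (γ 1 0) * z ^ 2 / (γ 1 0 * τ + γ 1 1)) *
        φ τ z) ∧
  (∀ l μ : ℤ, ∀ τ z : ℂ, 0 < τ.im →
    φ τ (z + l * τ + μ) =
      (-1 : ℂ) ^ (M * (l + μ)) *
        Complex.exp (-(Real.pi * Complex.I * M) * ((l : ℂ) ^ 2 * τ + 2 * l * z)) * φ τ z) ∧
  (∃ c : ℕ → ℤ → ℂ, ∀ τ z : ℂ, 0 < τ.im →
    HasSum (fun p : ℕ × ℤ => c p.1 p.2 * Complex.exp (2 * Real.pi * Complex.I * (p.1 : ℂ) * τ) *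
      Complex.exp (Real.pi * Complex.I * (2 * (p.2 : ℂ) + M) * z)) (φ τ z))

/-- `IsModularForm k f` means that `f : ℂ → ℂ` (viewed as a function on the upper half
plane `{τ : 0 < Im τ}`) is a modular form of weight `k` for `SL₂(ℤ)`: it is holomorphic,
satisfies the modular transformation law, and is bounded as `Im τ → ∞`. -/
def IsModularForm (k : ℤ) (f : ℂ → ℂ) : Prop :=
  DifferentiableOn ℂ f {τ : ℂ | 0 < τ.im} ∧
  (∀ γ : Matrix.SpecialLinearGroup (Fin 2) ℤ, ∀ τ : ℂ, 0 < τ.im →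
    f ((γ 0 0 * τ + γ 0 1) / (γ 1 0 * τ + γ 1 1)) = (γ 1 0 * τ + γ 1 1) ^ k * f τ) ∧
  (∃ A C : ℝ, ∀ τ : ℂ, C ≤ τ.im → ‖f τ‖ ≤ A)

section Aux
open Real

private lemma key (c : ℤ → ℂ) (e : ℤ → ℝ) (he : ∀ n, 0 ≤ e n)
    (hsum : Summable fun n : ℤ => ‖c n‖ * Real.exp (-e n)) :
    Tendsto (fun t : ℝ => ∑' n : ℤ, c n * Complex.exp ((-(e n * t) : ℝ) : ℂ)) atTop
      (𝓝 (∑' n : ℤ, if e n = 0 then c n else 0)) := by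
  apply tendsto_tsum_of_dominated_convergence hsum
  · intro n
    by_cases h : e n = 0
    · simp only [h, if_pos, zero_mul, neg_zero, Complex.ofReal_zero, Complex.exp_zero, mul_one]
      exact tendsto_const_nhds
    · rw [if_neg h]
      have hpos : 0 < e n := lt_of_le_of_ne (he n) (Ne.symm h)
      have h1 : Tendsto (fun t : ℝ => Real.exp (-(e n * t))) atTop (𝓝 0) := by
        apply Real.tendsto_exp_atBot.comp
        exact tendsto_neg_atBot_iff.mpr (tendsto_id.const_mul_atTop hpos)
      have h2 : Tendsto (fun t : ℝ => Complex.exp ((-(e n * t) : ℝ) : ℂ)) atTop (𝓝 0) :=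
        ((Complex.continuous_ofReal.tendsto 0).comp h1).congr (fun t => Complex.ofReal_exp _)
      simpa using tendsto_const_nhds.mul h2
  · filter_upwards [eventually_ge_atTop (1 : ℝ)] with t ht n
    rw [norm_mul, Complex.norm_exp]
    refine mul_le_mul_of_nonneg_left ?_ (norm_nonneg _)
    rw [Real.exp_le_exp, Complex.ofReal_re]
    have : e n ≤ e n * t := le_mul_of_one_le_right (he n) ht
    linarith

private lemma sumbound (a K : ℝ) (c : ℤ → ℂ) (e : ℤ → ℝ)
    (h : ∀ n : ℤ, ‖c n‖ * Real.exp (-e n) ≤ K * Real.exp (-π * ((n : ℝ) ^ 2 - 2 * a * |(n : ℝ)|))) :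
    Summable fun n : ℤ => ‖c n‖ * Real.exp (-e n) := by
  apply (((summable_pow_mul_jacobiTheta₂_term_bound a one_pos 0).mul_left K).of_nonneg_of_le
    (fun n => by positivity))
  intro n
  refine (h n).trans (le_of_eq ?_)
  push_cast
  rw [pow_zero, one_mul, one_mul]

private lemma norm_cexp (w : ℂ) : ‖Complex.exp w‖ = Real.exp w.re := by
  rw [Complex.norm_exp]

private lemma norm_cexp_lin (n : ℤ) (z : ℂ) :
    ‖Complex.exp (2 * π * Complex.I * (n : ℂ) * z)‖ = Real.exp (-(2 * π * n * z.im)) := by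
  rw [norm_cexp]
  congr 1
  simp [Complex.mul_re, Complex.mul_im]

private lemma exp_bound_aux (n : ℤ) (z : ℂ) :
    -(2 * π * n * z.im) + -(π * (n : ℝ) ^ 2) ≤ -π * ((n : ℝ) ^ 2 - 2 * |z.im| * |(n : ℝ)|) := by
  have h1 : -((n : ℝ) * z.im) ≤ |(n : ℝ)| * |z.im| :=
    (neg_le_abs _).trans_eq (abs_mul _ _)
  nlinarith [Real.pi_pos]

-- θ₃ limit
private lemma theta3_tendsto (z : ℂ) :
    Tendsto (fun t : ℝ => theta3 ((t : ℝ) * Complex.I) z) atTop (𝓝 1) := by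
  have H := key (fun n => Complex.exp (2 * π * Complex.I * (n : ℂ) * z))
    (fun n => π * (n : ℝ) ^ 2) (fun n => by positivity) ?_
  · have heq : (fun t : ℝ => theta3 ((t : ℝ) * Complex.I) z)
        = fun t : ℝ => ∑' n : ℤ, Complex.exp (2 * π * Complex.I * (n : ℂ) * z) *
          Complex.exp ((-(π * (n : ℝ) ^ 2 * t) : ℝ) : ℂ) := by
      funext t
      unfold theta3
      apply tsum_congr
      intro n
      rw [mul_comm]
      congr 2
      push_cast
      linear_combination (Real.pi * (n : ℂ) ^ 2 * t) * Complex.I_sq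
    rw [heq]
    convert H using 2
    rw [tsum_eq_single (0 : ℤ)]
    · norm_num
    · intro n hn
      rw [if_neg]
      refine mul_ne_zero Real.pi_ne_zero ?_
      simpa using hn
  · apply sumbound |z.im| 1
    intro n
    rw [norm_cexp_lin, ← Real.exp_add, one_mul, Real.exp_le_exp]
    exact exp_bound_aux n z

-- θ₄ limit
private lemma theta4_tendsto (z : ℂ) :
    Tendsto (fun t : ℝ => theta4 ((t : ℝ) * Complex.I) z) atTop (𝓝 1) := by
  have H := key (fun n => (-1 : ℂ) ^ n * Complex.exp (2 * π * Complex.I * (n : ℂ) * z))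
    (fun n => π * (n : ℝ) ^ 2) (fun n => by positivity) ?_
  · have heq : (fun t : ℝ => theta4 ((t : ℝ) * Complex.I) z)
        = fun t : ℝ => ∑' n : ℤ, ((-1 : ℂ) ^ n * Complex.exp (2 * π * Complex.I * (n : ℂ) * z)) *
          Complex.exp ((-(π * (n : ℝ) ^ 2 * t) : ℝ) : ℂ) := by
      funext t
      unfold theta4
      apply tsum_congr
      intro n
      have hA : Complex.exp (Real.pi * Complex.I * (n : ℂ) ^ 2 * ((t : ℂ) * Complex.I))
          = Complex.exp ((-(π * (n : ℝ) ^ 2 * t) : ℝ) : ℂ) := by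
        congr 1
        push_cast
        linear_combination (Real.pi * (n : ℂ) ^ 2 * t) * Complex.I_sq
      rw [hA]
      ring
    rw [heq]
    convert H using 2
    rw [tsum_eq_single (0 : ℤ)]
    · norm_num
    · intro n hn
      rw [if_neg]
      refine mul_ne_zero Real.pi_ne_zero ?_
      simpa using hn
  · apply sumbound |z.im| 1
    intro n
    rw [norm_mul, norm_zpow, norm_neg, norm_one, one_zpow, one_mul,
      norm_cexp_lin, ← Real.exp_add, one_mul, Real.exp_le_exp]
    exact exp_bound_aux n z

-- θ₂ limit (after multiplying by exp(π t / 4))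
private lemma theta2_tendsto (z : ℂ) :
    Tendsto (fun t : ℝ => theta2 ((t : ℝ) * Complex.I) z * Complex.exp ((π / 4 * t : ℝ) : ℂ))
      atTop (𝓝 (Complex.exp (π * Complex.I * z) + Complex.exp (-(π * Complex.I * z)))) := by
  have H := key (fun n => Complex.exp (2 * π * Complex.I * ((n : ℂ) + 1 / 2) * z))
    (fun n => π * ((n : ℝ) ^ 2 + n)) ?_ ?_
  · have heq : (fun t : ℝ => theta2 ((t : ℝ) * Complex.I) z * Complex.exp ((π / 4 * t : ℝ) : ℂ))
        = fun t : ℝ => ∑' n : ℤ, Complex.exp (2 * π * Complex.I * ((n : ℂ) + 1 / 2) * z) *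
          Complex.exp ((-(π * ((n : ℝ) ^ 2 + n) * t) : ℝ) : ℂ) := by
      funext t
      unfold theta2
      rw [← tsum_mul_right]
      apply tsum_congr
      intro n
      have hA : Complex.exp (Real.pi * Complex.I * ((n : ℂ) + 1 / 2) ^ 2 * ((t : ℂ) * Complex.I))
          * Complex.exp ((π / 4 * t : ℝ) : ℂ)
          = Complex.exp ((-(π * ((n : ℝ) ^ 2 + n) * t) : ℝ) : ℂ) := by
        rw [← Complex.exp_add]
        congr 1
        push_cast
        linear_combination (Real.pi * t * ((n : ℂ) + 1 / 2) ^ 2) * Complex.I_sq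
      rw [mul_right_comm, hA]
      ring
    rw [heq]
    convert H using 2
    rw [tsum_eq_sum (s := {0, -1}) ?_]
    · rw [Finset.sum_insert (by decide), Finset.sum_singleton]
      rw [if_pos (by norm_num), if_pos (by push_cast; norm_num)]
      congr 2
      · push_cast; ring
      · push_cast; ring
    · intro n hn
      simp only [Finset.mem_insert, Finset.mem_singleton, not_or] at hn
      rw [if_neg]
      refine mul_ne_zero Real.pi_ne_zero ?_
      have h0 : (n : ℝ) ^ 2 + n = n * (n + 1) := by ring
      rw [h0]
      refine mul_ne_zero (by exact_mod_cast hn.1) ?_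
      have : (n : ℝ) + 1 = ((n + 1 : ℤ) : ℝ) := by push_cast; ring
      rw [this]
      exact_mod_cast (by omega : n + 1 ≠ 0)
  · intro n
    have h0 : 0 ≤ (n : ℝ) ^ 2 + n := by
      have : (0 : ℤ) ≤ n ^ 2 + n := by
        rcases le_or_gt 0 n with h | h
        · nlinarith
        · nlinarith [(by omega : n + 1 ≤ 0)]
      exact_mod_cast this
    positivity
  · apply sumbound (|z.im| + 1) (Real.exp (π * |z.im|))
    intro n
    have h1 : ‖Complex.exp (2 * π * Complex.I * ((n : ℂ) + 1 / 2) * z)‖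
        = Real.exp (-(2 * π * ((n : ℝ) + 1 / 2) * z.im)) := by
      rw [norm_cexp]
      congr 1
      simp [Complex.mul_re, Complex.mul_im]
      try ring
    rw [h1, ← Real.exp_add, ← Real.exp_add, Real.exp_le_exp]
    have hn : -(n : ℝ) ≤ |(n : ℝ)| := neg_le_abs _
    have hz : -z.im ≤ |z.im| := neg_le_abs _
    have hnz : -((n : ℝ) * z.im) ≤ |(n : ℝ)| * |z.im| :=
      (neg_le_abs _).trans_eq (abs_mul _ _)
    nlinarith [Real.pi_pos, abs_nonneg ((n : ℝ)), abs_nonneg z.im,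
      mul_le_mul_of_nonneg_left hn Real.pi_pos.le,
      mul_le_mul_of_nonneg_left hz Real.pi_pos.le,
      mul_le_mul_of_nonneg_left hnz Real.pi_pos.le]


/-- The q⁰-coefficient of φ_{0,1} is y⁻¹ + 10 + y: for every z ∈ ℂ,
φ_{0,1}(it, z) → e^{-2πiz} + 10 + e^{2πiz} as t → +∞. -/
theorem phi01_q0_coefficient (z : ℂ) :
    Filter.Tendsto (fun t : ℝ => phi01 ((t : ℂ) * Complex.I) z) Filter.atTop
      (nhds (Complex.exp (-(2 * Real.pi * Complex.I * z)) + 10 +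
        Complex.exp (2 * Real.pi * Complex.I * z))) := by
  have hL0 : Complex.exp ((π : ℂ) * Complex.I * 0) + Complex.exp (-((π : ℂ) * Complex.I * 0))
      = 2 := by norm_num
  have h20 := theta2_tendsto 0
  rw [hL0] at h20
  have hr2 : Tendsto (fun t : ℝ => theta2 ((t : ℝ) * Complex.I) z / theta2 ((t : ℝ) * Complex.I) 0)
      atTop (𝓝 ((Complex.exp ((π : ℂ) * Complex.I * z)
        + Complex.exp (-((π : ℂ) * Complex.I * z))) / 2)) := by
    have h := (theta2_tendsto z).div h20 two_ne_zero
    exact h.congr fun t => mul_div_mul_right _ _ (Complex.exp_ne_zero _)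
  have hr3 := (theta3_tendsto z).div (theta3_tendsto 0) one_ne_zero
  have hr4 := (theta4_tendsto z).div (theta4_tendsto 0) one_ne_zero
  have T := (((hr2.pow 2).add (hr3.pow 2)).add (hr4.pow 2)).const_mul (4 : ℂ)
  have hval : (4 : ℂ) * (((Complex.exp ((π : ℂ) * Complex.I * z)
        + Complex.exp (-((π : ℂ) * Complex.I * z))) / 2) ^ 2
      + ((1 : ℂ) / 1) ^ 2 + ((1 : ℂ) / 1) ^ 2)
      = Complex.exp (-(2 * Real.pi * Complex.I * z)) + 10 +
        Complex.exp (2 * Real.pi * Complex.I * z) := by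
    have hab : Complex.exp ((π : ℂ) * Complex.I * z) * Complex.exp (-((π : ℂ) * Complex.I * z))
        = 1 := by rw [← Complex.exp_add]; simp
    have e1 : Complex.exp (2 * (π : ℂ) * Complex.I * z)
        = Complex.exp ((π : ℂ) * Complex.I * z) * Complex.exp ((π : ℂ) * Complex.I * z) := by
      rw [← Complex.exp_add]; congr 1; ring
    have e2 : Complex.exp (-(2 * (π : ℂ) * Complex.I * z))
        = Complex.exp (-((π : ℂ) * Complex.I * z)) * Complex.exp (-((π : ℂ) * Complex.I * z)) := by
      rw [← Complex.exp_add]; congr 1; ring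
    rw [e1, e2]
    field_simp
    linear_combination 8 * hab
  rw [hval] at T
  exact T.congr fun t => rfl

end Aux
end

section
/- For every z ∈ ℂ, the function φ_{−2,1}(it, z) tends to e^{−2πiz} − 2 + e^{2πiz} as the real parameter t tends to +∞; that is, the q⁰-coefficient of the Fourier expansion of φ_{−2,1} is y⁻¹ − 2 + y. -/
open Complex Filter Topology

private noncomputable def Ff (z : ℂ) (t : ℝ) (n : ℤ) : ℂ :=
  (-1 : ℂ) ^ n * ((Real.exp (-(Real.pi*((n:ℝ)^2+(n:ℝ))*t)) : ℝ) : ℂ) *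
    Complex.exp (2 * Real.pi * Complex.I * ((n : ℂ) + 1 / 2) * z)

private lemma theta1_eq (z : ℂ) (t : ℝ) :
    theta1 ((t:ℂ) * Complex.I) z * Complex.exp ((Real.pi : ℂ) * t / 4)
      = -Complex.I * ∑' n : ℤ, Ff z t n := by
  rw [theta1, mul_assoc, neg_mul, neg_mul, neg_inj, ← tsum_mul_right]
  congr 1
  refine tsum_congr fun n => ?_
  rw [Ff]
  have key : Complex.exp ((Real.pi:ℂ)*Complex.I*((n:ℂ)+1/2)^2*((t:ℂ)*Complex.I)) *
      Complex.exp ((Real.pi:ℂ)*t/4)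
      = ((Real.exp (-(Real.pi*((n:ℝ)^2+(n:ℝ))*t)) : ℝ) : ℂ) := by
    rw [← Complex.exp_add, Complex.ofReal_exp]
    congr 1
    have h : (Real.pi:ℂ)*Complex.I*((n:ℂ)+1/2)^2*((t:ℂ)*Complex.I)
        = Real.pi*((n:ℂ)+1/2)^2*(t:ℂ)*(Complex.I*Complex.I) := by ring
    rw [h, Complex.I_mul_I]
    push_cast
    ring
  rw [mul_right_comm, mul_assoc ((-1:ℂ)^n), key]

private lemma aux_nat (A B : ℝ) :
    Summable (fun n : ℕ => Real.exp (-(Real.pi*((n:ℝ)^2)) + A*n + B)) := by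
  apply summable_of_ratio_norm_eventually_le (r := 1/2) (by norm_num)
  have h : Tendsto (fun n : ℕ => -(Real.pi*(2*(n:ℝ)+1)) + A) atTop atBot := by
    apply tendsto_atBot.mpr; intro b
    filter_upwards [eventually_ge_atTop ⌈(A - b)/(2*Real.pi)⌉₊] with n hn
    have hn' : ((A - b)/(2*Real.pi)) ≤ (n:ℝ) := le_trans (Nat.le_ceil _) (by exact_mod_cast hn)
    have h2 : A - b ≤ (n:ℝ) * (2*Real.pi) := (div_le_iff₀ (by positivity)).mp hn'
    nlinarith [Real.pi_pos]
  filter_upwards [h.eventually (eventually_le_atBot (Real.log (1/2)))] with n hn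
  rw [Real.norm_eq_abs, Real.norm_eq_abs, abs_of_pos (Real.exp_pos _),
    abs_of_pos (Real.exp_pos _)]
  have e1 : Real.exp (-(Real.pi*(((n+1:ℕ)):ℝ)^2) + A*((n+1:ℕ):ℝ) + B)
      = Real.exp (-(Real.pi*(2*(n:ℝ)+1)) + A) * Real.exp (-(Real.pi*((n:ℝ)^2)) + A*n + B) := by
    rw [← Real.exp_add]; congr 1; push_cast; ring
  rw [e1]
  have h3 := Real.exp_le_exp.mpr hn
  rw [Real.exp_log (by norm_num : (0:ℝ) < 1/2)] at h3
  exact mul_le_mul_of_nonneg_right h3 (Real.exp_pos _).le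

private lemma aux_sum (A B : ℝ) :
    Summable (fun n : ℤ => Real.exp (-(Real.pi*((n:ℝ)^2+(n:ℝ))) + A*(n:ℝ) + B)) := by
  apply Summable.of_nat_of_neg
  · exact (aux_nat (A - Real.pi) B).congr (fun n => by congr 1; push_cast; ring)
  · exact (aux_nat (Real.pi - A) B).congr (fun n => by congr 1; push_cast; ring)

private lemma norm_Ff (z : ℂ) (t : ℝ) (n : ℤ) :
    ‖Ff z t n‖ = Real.exp (-(Real.pi*((n:ℝ)^2+(n:ℝ))*t)
      + (-(2*Real.pi*z.im))*(n:ℝ) + (-(Real.pi*z.im))) := by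
  rw [Ff, norm_mul, norm_mul, norm_zpow, norm_neg, norm_one, one_zpow, one_mul,
    Complex.norm_real, Real.norm_eq_abs, abs_of_pos (Real.exp_pos _),
    Complex.norm_exp, ← Real.exp_add]
  congr 1
  have : (2*(Real.pi:ℂ)*Complex.I*((n:ℂ)+1/2)*z).re = -(2*Real.pi*((n:ℝ)+1/2)*z.im) := by
    simp [Complex.mul_re, Complex.mul_im]
  rw [this]
  ring

private lemma pos_cn {n : ℤ} (h0 : n ≠ 0) (h1 : n ≠ -1) : (2:ℝ) ≤ (n:ℝ)^2 + (n:ℝ) := by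
  have : (2:ℤ) ≤ n^2 + n := by
    rcases lt_or_ge n 0 with h | h
    · have : n ≤ -2 := by omega
      nlinarith
    · have : 1 ≤ n := by omega
      nlinarith
  exact_mod_cast this

private lemma nonneg_cn (n : ℤ) : (0:ℝ) ≤ (n:ℝ)^2 + (n:ℝ) := by
  have : (0:ℤ) ≤ n^2 + n := by
    rcases le_or_gt 0 n with h | h
    · nlinarith
    · have : n ≤ -1 := by omega
      nlinarith
  exact_mod_cast this

private lemma theta1_sum_tendsto (z : ℂ) :
    Tendsto (fun t : ℝ => ∑' n : ℤ, Ff z t n) atTop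
      (𝓝 (Complex.exp (Real.pi*Complex.I*z) - Complex.exp (-(Real.pi*Complex.I*z)))) := by
  set g : ℤ → ℂ := fun n => if n = 0 then Complex.exp (Real.pi*Complex.I*z)
    else if n = -1 then -Complex.exp (-(Real.pi*Complex.I*z)) else 0 with hgdef
  have hgsum : ∑' n, g n
      = Complex.exp (Real.pi*Complex.I*z) - Complex.exp (-(Real.pi*Complex.I*z)) := by
    rw [tsum_eq_sum (s := ({0, -1} : Finset ℤ))
      (by intro b hb'; simp at hb'; simp [hgdef, hb'.1, hb'.2])]
    rw [Finset.sum_pair (by decide)]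
    simp [hgdef]
    ring
  have hab : ∀ n : ℤ, Tendsto (fun t => Ff z t n) atTop (𝓝 (g n)) := by
    intro n
    by_cases h0 : n = 0
    · have e : ∀ t : ℝ, Ff z t 0 = Complex.exp (Real.pi*Complex.I*z) := by
        intro t
        rw [Ff]
        norm_num
        congr 1
        ring
      subst h0
      simp only [e, hgdef, if_pos rfl]
      exact tendsto_const_nhds
    by_cases h1 : n = -1
    · have e : ∀ t : ℝ, Ff z t (-1) = -Complex.exp (-(Real.pi*Complex.I*z)) := by
        intro t
        rw [Ff]
        norm_num
        congr 1
        ring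
      subst h1
      refine Tendsto.congr (fun t => (e t).symm) ?_
      simp only [hgdef]
      norm_num
    · have hc : (0:ℝ) < Real.pi*((n:ℝ)^2+(n:ℝ)) :=
        mul_pos Real.pi_pos (by linarith [pos_cn h0 h1])
      have hlin : Tendsto (fun t : ℝ => -(Real.pi*((n:ℝ)^2+(n:ℝ))*t)) atTop atBot := by
        have := tendsto_neg_atTop_atBot.comp ((tendsto_id (α := ℝ)).const_mul_atTop hc)
        exact this.congr (fun t => by simp)
      have h2 : Tendsto (fun t : ℝ => Real.exp (-(Real.pi*((n:ℝ)^2+(n:ℝ))*t))) atTop (𝓝 0) :=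
        Real.tendsto_exp_atBot.comp hlin
      have h3 : Tendsto (fun t : ℝ => ((Real.exp (-(Real.pi*((n:ℝ)^2+(n:ℝ))*t)) : ℝ) : ℂ))
          atTop (𝓝 (((0:ℝ)):ℂ)) := (Complex.continuous_ofReal.tendsto (0:ℝ)).comp h2
      rw [Complex.ofReal_zero] at h3
      have h4 := (h3.const_mul ((-1:ℂ)^n)).mul_const
        (Complex.exp (2*Real.pi*Complex.I*((n:ℂ)+1/2)*z))
      simp only [mul_zero, zero_mul] at h4
      simp only [hgdef, if_neg h0, if_neg h1]
      exact h4.congr (fun t => by rw [Ff])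
  have hbound : ∀ᶠ t : ℝ in atTop, ∀ n : ℤ, ‖Ff z t n‖
      ≤ Real.exp (-(Real.pi*((n:ℝ)^2+(n:ℝ))) + (-(2*Real.pi*z.im))*(n:ℝ) + (-(Real.pi*z.im))) := by
    filter_upwards [eventually_ge_atTop (1:ℝ)] with t ht n
    rw [norm_Ff]
    apply Real.exp_le_exp.mpr
    have hc := nonneg_cn n
    nlinarith [mul_nonneg (mul_nonneg Real.pi_pos.le hc) (sub_nonneg.mpr ht)]
  have := tendsto_tsum_of_dominated_convergence
    (aux_sum (-(2*Real.pi*z.im)) (-(Real.pi*z.im))) hab hbound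
  rwa [hgsum] at this

private noncomputable def Qq (t : ℝ) (n : ℕ) : ℂ :=
  Complex.exp (2 * Real.pi * Complex.I * ((n : ℂ) + 1) * ((t:ℂ) * Complex.I))

private lemma Qq_eq (t : ℝ) (n : ℕ) :
    Qq t n = ((Real.exp (-(2*Real.pi*((n:ℝ)+1)*t)) : ℝ) : ℂ) := by
  rw [Qq, Complex.ofReal_exp]
  congr 1
  have h : 2*(Real.pi:ℂ)*Complex.I*((n:ℂ)+1)*((t:ℂ)*Complex.I)
      = 2*Real.pi*((n:ℂ)+1)*(t:ℂ)*(Complex.I*Complex.I) := by ring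
  rw [h, Complex.I_mul_I]
  push_cast
  ring

private lemma exp_neg_one_le_half : Real.exp (-1) ≤ 1/2 := by
  have h2 : (2:ℝ) ≤ Real.exp 1 := by have := Real.add_one_le_exp 1; linarith
  have hmul : Real.exp (-1) * Real.exp 1 = 1 := by rw [← Real.exp_add]; norm_num
  nlinarith [(Real.exp_pos (-1)).le]

private lemma rr_sum : Summable (fun n : ℕ => (3/2) * Real.exp (-(2*Real.pi*((n:ℝ)+1)))) := by
  apply Summable.mul_left
  have he : ∀ n : ℕ, Real.exp (-(2*Real.pi*((n:ℝ)+1))) = Real.exp (-(2*Real.pi)) ^ (n+1) := by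
    intro n
    rw [← Real.exp_nat_mul]
    congr 1
    push_cast
    ring
  simp only [he, pow_succ]
  apply Summable.mul_right
  exact summable_geometric_of_lt_one (Real.exp_nonneg _)
    (Real.exp_lt_one_iff.mpr (by nlinarith [Real.pi_pos]))

private lemma Qq_small {t : ℝ} (ht : 1 ≤ t) (n : ℕ) :
    ‖Qq t n‖ ≤ Real.exp (-(2*Real.pi*((n:ℝ)+1))) := by
  rw [Qq_eq, Complex.norm_real, Real.norm_eq_abs, abs_of_pos (Real.exp_pos _)]
  apply Real.exp_le_exp.mpr
  nlinarith [mul_nonneg (mul_nonneg (by positivity : (0:ℝ) ≤ 2*Real.pi)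
    (by positivity : (0:ℝ) ≤ (n:ℝ)+1)) (sub_nonneg.mpr ht)]

private lemma rr_le_half (n : ℕ) : Real.exp (-(2*Real.pi*((n:ℝ)+1))) ≤ 1/2 := by
  refine le_trans (Real.exp_le_exp.mpr ?_) exp_neg_one_le_half
  nlinarith [Real.pi_gt_three]

private lemma Qq_ne {t : ℝ} (ht : 1 ≤ t) (n : ℕ) : 1 - Qq t n ≠ 0 := by
  intro h
  have h1 : Qq t n = 1 := by
    have := sub_eq_zero.mp h
    exact this.symm
  have := Qq_small ht n
  rw [h1, norm_one] at this
  linarith [rr_le_half n]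

private lemma log_bound {t : ℝ} (ht : 1 ≤ t) (n : ℕ) :
    ‖Complex.log (1 - Qq t n)‖ ≤ (3/2) * Real.exp (-(2*Real.pi*((n:ℝ)+1))) := by
  have hs : ‖-Qq t n‖ ≤ 1/2 := by
    rw [norm_neg]; exact le_trans (Qq_small ht n) (rr_le_half n)
  have := Complex.norm_log_one_add_half_le_self hs
  rw [← sub_eq_add_neg] at this
  refine le_trans this ?_
  have : ‖-Qq t n‖ ≤ Real.exp (-(2*Real.pi*((n:ℝ)+1))) := by
    rw [norm_neg]; exact Qq_small ht n
  nlinarith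

private lemma log_summable {t : ℝ} (ht : 1 ≤ t) :
    Summable (fun n : ℕ => Complex.log (1 - Qq t n)) :=
  Summable.of_norm_bounded rr_sum (fun n => by
    simpa using log_bound ht n)

private lemma P_eq {t : ℝ} (ht : 1 ≤ t) :
    ∏' n : ℕ, (1 - Qq t n) = Complex.exp (∑' n : ℕ, Complex.log (1 - Qq t n)) := by
  have hp : HasProd (fun n : ℕ => 1 - Qq t n)
      (Complex.exp (∑' n : ℕ, Complex.log (1 - Qq t n))) :=
    ((log_summable ht).hasSum.cexp).congr_fun (fun n => (Complex.exp_log (Qq_ne ht n)).symm)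
  exact hp.tprod_eq

private lemma S_tendsto :
    Tendsto (fun t : ℝ => ∑' n : ℕ, Complex.log (1 - Qq t n)) atTop (𝓝 0) := by
  have key := tendsto_tsum_of_dominated_convergence
    (𝓕 := atTop) (f := fun (t : ℝ) (n : ℕ) => Complex.log (1 - Qq t n))
    (g := fun _ : ℕ => (0:ℂ))
    (bound := fun n : ℕ => (3/2) * Real.exp (-(2*Real.pi*((n:ℝ)+1)))) rr_sum ?_ ?_
  · simpa using key
  · intro n
    have hc : (0:ℝ) < 2*Real.pi*((n:ℝ)+1) := by positivity
    have hlin : Tendsto (fun t : ℝ => -(2*Real.pi*((n:ℝ)+1)*t)) atTop atBot := by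
      have := tendsto_neg_atTop_atBot.comp ((tendsto_id (α := ℝ)).const_mul_atTop hc)
      exact this.congr (fun t => by simp)
    have h2 : Tendsto (fun t : ℝ => Real.exp (-(2*Real.pi*((n:ℝ)+1)*t))) atTop (𝓝 0) :=
      Real.tendsto_exp_atBot.comp hlin
    have h3 : Tendsto (fun t : ℝ => ((Real.exp (-(2*Real.pi*((n:ℝ)+1)*t)) : ℝ) : ℂ))
        atTop (𝓝 (((0:ℝ)):ℂ)) := (Complex.continuous_ofReal.tendsto (0:ℝ)).comp h2
    rw [Complex.ofReal_zero] at h3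
    have h4 : Tendsto (fun t : ℝ => Qq t n) atTop (𝓝 0) := by
      refine h3.congr (fun t => ?_)
      rw [Qq_eq]
    have h5 : Tendsto (fun t : ℝ => 1 - Qq t n) atTop (𝓝 1) := by
      have h5' := ((tendsto_const_nhds : Tendsto (fun _ : ℝ => (1:ℂ)) atTop (𝓝 1))).sub h4
      simpa using h5'
    have h6 := h5.clog Complex.one_mem_slitPlane
    rwa [Complex.log_one] at h6
  · filter_upwards [eventually_ge_atTop (1:ℝ)] with t ht n
    exact log_bound ht n

private lemma P_tendsto :
    Tendsto (fun t : ℝ => ∏' n : ℕ, (1 - Qq t n)) atTop (𝓝 1) := by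
  have h := (Complex.continuous_exp.tendsto 0).comp S_tendsto
  rw [Complex.exp_zero] at h
  refine Tendsto.congr' ?_ h
  filter_upwards [eventually_ge_atTop (1:ℝ)] with t ht
  exact (P_eq ht).symm

/-- The q⁰-coefficient of φ_{-2,1} is y⁻¹ - 2 + y: for every z ∈ ℂ,
φ_{-2,1}(it, z) → e^{-2πiz} - 2 + e^{2πiz} as t → +∞. -/
theorem phim21_q0_coefficient (z : ℂ) :
    Filter.Tendsto (fun t : ℝ => phim21 ((t : ℂ) * Complex.I) z) Filter.atTop
      (nhds (Complex.exp (-(2 * Real.pi * Complex.I * z)) - 2 +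
        Complex.exp (2 * Real.pi * Complex.I * z))) := by
  have key : ∀ t : ℝ, phim21 ((t:ℂ)*Complex.I) z
      = -(theta1 ((t:ℂ)*Complex.I) z * Complex.exp ((Real.pi:ℂ)*t/4))^2
        / (∏' n : ℕ, (1 - Complex.exp (2*Real.pi*Complex.I*((n:ℂ)+1)*((t:ℂ)*Complex.I))))^6 := by
    intro t
    unfold phim21 dedekindEta
    set θ := theta1 ((t:ℂ)*Complex.I) z with hθ
    set P := ∏' n : ℕ, (1 - Complex.exp (2*Real.pi*Complex.I*((n:ℂ)+1)*((t:ℂ)*Complex.I))) with hPdef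
    have h1 : Complex.exp (Real.pi*Complex.I*((t:ℂ)*Complex.I)/12)^(6:ℕ)
        = Complex.exp (-((Real.pi:ℂ)*t/2)) := by
      rw [← Complex.exp_nat_mul]
      congr 1
      push_cast
      have h : (6:ℂ) * ((Real.pi:ℂ)*Complex.I*((t:ℂ)*Complex.I)/12)
          = (Real.pi:ℂ)*(t:ℂ)*(Complex.I*Complex.I)/2 := by ring
      rw [h, Complex.I_mul_I]
      ring
    have h2 : (θ * Complex.exp ((Real.pi:ℂ)*t/4))^(2:ℕ)
        = θ^2 * Complex.exp ((Real.pi:ℂ)*t/2) := by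
      rw [mul_pow, ← Complex.exp_nat_mul]
      congr 2
      push_cast
      ring
    rw [h2, mul_pow, h1, div_mul_eq_div_div]
    congr 1
    rw [Complex.exp_neg, div_inv_eq_mul, neg_mul]
  have hN : Tendsto (fun t : ℝ => theta1 ((t:ℂ)*Complex.I) z * Complex.exp ((Real.pi:ℂ)*t/4))
      atTop (𝓝 (-Complex.I * (Complex.exp (Real.pi*Complex.I*z)
        - Complex.exp (-(Real.pi*Complex.I*z))))) := by
    have h := (theta1_sum_tendsto z).const_mul (-Complex.I)
    exact Tendsto.congr (fun t => (theta1_eq z t).symm) h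
  have hPQ : Tendsto (fun t : ℝ => ∏' n : ℕ,
      (1 - Complex.exp (2*Real.pi*Complex.I*((n:ℂ)+1)*((t:ℂ)*Complex.I)))) atTop (𝓝 1) := by
    have h := P_tendsto
    simp only [Qq] at h
    exact h
  have main := ((hN.pow 2).neg).div (hPQ.pow 6) (by norm_num)
  have hval : (Complex.exp (-(2 * Real.pi * Complex.I * z)) - 2
        + Complex.exp (2 * Real.pi * Complex.I * z))
      = -(-Complex.I * (Complex.exp (Real.pi*Complex.I*z)
          - Complex.exp (-(Real.pi*Complex.I*z))))^2 / 1^6 := by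
    have e1 : Complex.exp (Real.pi*Complex.I*z) * Complex.exp (Real.pi*Complex.I*z)
        = Complex.exp (2*Real.pi*Complex.I*z) := by rw [← Complex.exp_add]; congr 1; ring
    have e2 : Complex.exp (Real.pi*Complex.I*z) * Complex.exp (-(Real.pi*Complex.I*z)) = 1 := by
      rw [← Complex.exp_add]; simp
    have e3 : Complex.exp (-(Real.pi*Complex.I*z)) * Complex.exp (-(Real.pi*Complex.I*z))
        = Complex.exp (-(2*Real.pi*Complex.I*z)) := by rw [← Complex.exp_add]; congr 1; ring
    have hI : Complex.I * Complex.I = -1 := Complex.I_mul_I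
    field_simp
    linear_combination (-1 : ℂ)*e1 + 2*e2 - e3 + (Complex.exp (Real.pi*Complex.I*z)
      - Complex.exp (-(Real.pi*Complex.I*z)))^2 * hI
  rw [hval]
  exact Tendsto.congr (fun t => (key t).symm) main
end

section
/- For every z ∈ ℂ, with y = e^{2πiz}, the function E₄(it)·φ_{0,1}(it, z)·φ_{−2,1}(it, z)² tends to y⁻³ + 6y⁻² − 33y⁻¹ + 52 − 33y + 6y² + y³ as the real parameter t tends to +∞. -/
open Complex Filter Topology

/-- Dominated convergence for sums of the form `∑ a n * exp(-(c n) t)` as `t → ∞`. -/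
lemma tendsto_tsum_exp {ι : Type*} (a : ι → ℂ) (c : ι → ℝ) (hc : ∀ n, 0 ≤ c n)
    (hs : Summable (fun n => ‖a n‖ * Real.exp (-c n))) :
    Tendsto (fun t : ℝ => ∑' n, a n * Complex.exp (-(c n : ℂ) * t)) atTop
      (nhds (∑' n, if c n = 0 then a n else 0)) := by
  apply tendsto_tsum_of_dominated_convergence hs
  · intro k
    by_cases h : c k = 0
    · simpa [h] using tendsto_const_nhds
    · simp only [h, if_false]
      rw [tendsto_zero_iff_norm_tendsto_zero]
      have hnorm : ∀ t : ℝ, ‖a k * Complex.exp (-(c k : ℂ) * t)‖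
          = ‖a k‖ * Real.exp (-(c k * t)) := by
        intro t
        rw [norm_mul, Complex.norm_exp]
        congr 2
        simp
      simp only [hnorm]
      rw [show (0:ℝ) = ‖a k‖ * 0 by ring]
      apply Tendsto.const_mul
      apply Real.tendsto_exp_atBot.comp
      have hck : 0 < c k := lt_of_le_of_ne (hc k) (Ne.symm h)
      have : Tendsto (fun t : ℝ => c k * t) atTop atTop :=
        tendsto_id.const_mul_atTop hck
      simpa [Function.comp_def] using tendsto_neg_atTop_atBot.comp this
  · filter_upwards [eventually_ge_atTop (1:ℝ)] with t ht k
    rw [norm_mul, Complex.norm_exp]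
    have : (-(c k : ℂ) * t).re = -(c k * t) := by simp
    rw [this]
    refine mul_le_mul_of_nonneg_left ?_ (norm_nonneg _)
    exact Real.exp_le_exp.mpr (by nlinarith [hc k])

lemma summable_master (A : ℝ) :
    Summable (fun n : ℤ => Real.exp (A * |(n : ℝ)| - Real.pi * (n : ℝ) ^ 2)) := by
  have := summable_pow_mul_jacobiTheta₂_term_bound (A / (2 * Real.pi)) (zero_lt_one) 0
  refine this.congr fun n => ?_
  have hπ : (Real.pi : ℝ) ≠ 0 := Real.pi_ne_zero
  rw [pow_zero, one_mul]
  congr 1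
  push_cast
  field_simp
  ring

noncomputable def cQ (n : ℤ) : ℝ := Real.pi * ((n : ℝ) * ((n : ℝ) + 1))
noncomputable def cS (n : ℤ) : ℝ := Real.pi * (n : ℝ) ^ 2

lemma cQ_nonneg (n : ℤ) : 0 ≤ cQ n := by
  unfold cQ
  rcases le_or_gt 0 n with h | h
  · have h0 : (0:ℝ) ≤ (n:ℝ) := by exact_mod_cast h
    positivity
  · have h1 : (n:ℝ) + 1 ≤ 0 := by
      have : n + 1 ≤ 0 := by omega
      exact_mod_cast this
    have h0 : (n:ℝ) ≤ 0 := by exact_mod_cast h.le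
    nlinarith [Real.pi_pos, mul_nonneg (neg_nonneg.mpr h0) (neg_nonneg.mpr h1)]

lemma cS_nonneg (n : ℤ) : 0 ≤ cS n := by unfold cS; positivity

lemma summable_bound_cQ (z : ℂ) (ε : ℤ → ℂ) (hε : ∀ n, ‖ε n‖ = 1) :
    Summable (fun n : ℤ =>
      ‖ε n * Complex.exp (2 * (Real.pi:ℂ) * Complex.I * (n:ℂ) * z)‖ * Real.exp (-cQ n)) := by
  apply Summable.of_nonneg_of_le (fun n => by positivity) _
    (summable_master (2 * Real.pi * |z.im| + Real.pi))
  intro n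
  rw [norm_mul, hε n, one_mul, Complex.norm_exp, ← Real.exp_add]
  have hre : (2 * (Real.pi:ℂ) * Complex.I * (n:ℂ) * z).re = -(2 * Real.pi * n * z.im) := by
    simp
  rw [hre]
  apply Real.exp_le_exp.mpr
  unfold cQ
  have h1 : -((n:ℝ) * z.im) ≤ |(n:ℝ)| * |z.im| := by
    rw [← abs_mul]; exact neg_le_abs _
  have h2 : -(n:ℝ) ≤ |(n:ℝ)| := neg_le_abs _
  have h3 : |(n:ℝ)| ^ 2 = (n:ℝ) ^ 2 := sq_abs _
  nlinarith [Real.pi_pos]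

lemma summable_bound_cS (z : ℂ) (ε : ℤ → ℂ) (hε : ∀ n, ‖ε n‖ = 1) :
    Summable (fun n : ℤ =>
      ‖ε n * Complex.exp (2 * (Real.pi:ℂ) * Complex.I * (n:ℂ) * z)‖ * Real.exp (-cS n)) := by
  apply Summable.of_nonneg_of_le (fun n => by positivity) _
    (summable_master (2 * Real.pi * |z.im|))
  intro n
  rw [norm_mul, hε n, one_mul, Complex.norm_exp, ← Real.exp_add]
  have hre : (2 * (Real.pi:ℂ) * Complex.I * (n:ℂ) * z).re = -(2 * Real.pi * n * z.im) := by
    simp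
  rw [hre]
  apply Real.exp_le_exp.mpr
  unfold cS
  have h1 : -((n:ℝ) * z.im) ≤ |(n:ℝ)| * |z.im| := by
    rw [← abs_mul]; exact neg_le_abs _
  nlinarith [Real.pi_pos]

lemma tendsto_S_cQ (z : ℂ) (ε : ℤ → ℂ) (hε : ∀ n, ‖ε n‖ = 1) :
    Tendsto (fun t : ℝ => ∑' n : ℤ,
        (ε n * Complex.exp (2 * (Real.pi:ℂ) * Complex.I * (n:ℂ) * z)) *
          Complex.exp (-(cQ n : ℂ) * t)) atTop
      (nhds (ε 0 + ε (-1) * Complex.exp (2 * (Real.pi:ℂ) * Complex.I * ((-1:ℤ):ℂ) * z))) := by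
  have H := tendsto_tsum_exp
    (fun n : ℤ => ε n * Complex.exp (2 * (Real.pi:ℂ) * Complex.I * (n:ℂ) * z)) cQ
    cQ_nonneg (summable_bound_cQ z ε hε)
  have hval : (∑' n : ℤ, if cQ n = 0 then
      ε n * Complex.exp (2 * (Real.pi:ℂ) * Complex.I * (n:ℂ) * z) else 0)
      = ε 0 + ε (-1) * Complex.exp (2 * (Real.pi:ℂ) * Complex.I * ((-1:ℤ):ℂ) * z) := by
    rw [tsum_eq_sum (s := ({0, -1} : Finset ℤ)) ?_]
    · rw [Finset.sum_pair (by decide : (0:ℤ) ≠ -1)]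
      have hc0 : cQ 0 = 0 := by simp [cQ]
      have hc1 : cQ (-1) = 0 := by simp [cQ]
      rw [if_pos hc0, if_pos hc1]
      norm_num
    · intro n hn
      simp only [Finset.mem_insert, Finset.mem_singleton, not_or] at hn
      have hne : (n:ℝ) * ((n:ℝ) + 1) ≠ 0 := by
        have : ((n * (n + 1) : ℤ) : ℝ) ≠ 0 :=
          Int.cast_ne_zero.mpr (mul_ne_zero hn.1 (by omega))
        push_cast at this
        convert this using 1
      have : cQ n ≠ 0 := by
        unfold cQ; exact mul_ne_zero Real.pi_ne_zero hne
      rw [if_neg this]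
  rwa [hval] at H

lemma tendsto_S_cS (z : ℂ) (ε : ℤ → ℂ) (hε : ∀ n, ‖ε n‖ = 1) :
    Tendsto (fun t : ℝ => ∑' n : ℤ,
        (ε n * Complex.exp (2 * (Real.pi:ℂ) * Complex.I * (n:ℂ) * z)) *
          Complex.exp (-(cS n : ℂ) * t)) atTop (nhds (ε 0)) := by
  have H := tendsto_tsum_exp
    (fun n : ℤ => ε n * Complex.exp (2 * (Real.pi:ℂ) * Complex.I * (n:ℂ) * z)) cS
    cS_nonneg (summable_bound_cS z ε hε)
  have hval : (∑' n : ℤ, if cS n = 0 then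
      ε n * Complex.exp (2 * (Real.pi:ℂ) * Complex.I * (n:ℂ) * z) else 0) = ε 0 := by
    rw [tsum_eq_single (0 : ℤ) ?_]
    · simp [cS]
    · intro n hn
      have : cS n ≠ 0 := by
        unfold cS
        have : ((n:ℝ))^2 ≠ 0 := by
          have : (n:ℝ) ≠ 0 := Int.cast_ne_zero.mpr hn
          positivity
        exact mul_ne_zero Real.pi_ne_zero this
      rw [if_neg this]
  rwa [hval] at H

lemma theta2_factor (t : ℝ) (z : ℂ) :
    theta2 ((t:ℂ) * Complex.I) z = Complex.exp (-(Real.pi/4 : ℂ) * t) *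
      (Complex.exp ((Real.pi:ℂ) * Complex.I * z) *
        ∑' n : ℤ, ((1:ℂ) * Complex.exp (2 * (Real.pi:ℂ) * Complex.I * (n:ℂ) * z)) *
          Complex.exp (-(cQ n : ℂ) * t)) := by
  unfold theta2
  calc ∑' n : ℤ, Complex.exp (Real.pi * Complex.I * ((n : ℂ) + 1 / 2) ^ 2 * ((t:ℂ) * Complex.I)) *
        Complex.exp (2 * Real.pi * Complex.I * ((n : ℂ) + 1 / 2) * z)
      = ∑' n : ℤ, Complex.exp (-(Real.pi/4 : ℂ) * t) *
          (Complex.exp ((Real.pi:ℂ) * Complex.I * z) *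
            (((1:ℂ) * Complex.exp (2 * (Real.pi:ℂ) * Complex.I * (n:ℂ) * z)) *
              Complex.exp (-(cQ n : ℂ) * t))) := by
        apply tsum_congr
        intro n
        have hA : Complex.exp (Real.pi * Complex.I * ((n : ℂ) + 1 / 2) ^ 2 * ((t:ℂ) * Complex.I))
            = Complex.exp (-(Real.pi/4 : ℂ) * t) * Complex.exp (-(cQ n : ℂ) * t) := by
          rw [← Complex.exp_add]
          congr 1
          unfold cQ
          push_cast
          linear_combination (Real.pi : ℂ) * t * ((n:ℂ) + 1/2)^2 * Complex.I_mul_I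
        have hB : Complex.exp (2 * Real.pi * Complex.I * ((n : ℂ) + 1 / 2) * z)
            = Complex.exp ((Real.pi:ℂ) * Complex.I * z) *
              Complex.exp (2 * (Real.pi:ℂ) * Complex.I * (n:ℂ) * z) := by
          rw [← Complex.exp_add]
          congr 1
          ring
        rw [hA, hB]
        ring
    _ = _ := by rw [tsum_mul_left, tsum_mul_left]

lemma theta1_factor (t : ℝ) (z : ℂ) :
    theta1 ((t:ℂ) * Complex.I) z = -Complex.I * (Complex.exp (-(Real.pi/4 : ℂ) * t) *
      (Complex.exp ((Real.pi:ℂ) * Complex.I * z) *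
        ∑' n : ℤ, (((-1:ℂ)^n) * Complex.exp (2 * (Real.pi:ℂ) * Complex.I * (n:ℂ) * z)) *
          Complex.exp (-(cQ n : ℂ) * t))) := by
  unfold theta1
  congr 1
  calc ∑' n : ℤ, (-1:ℂ)^n *
        Complex.exp (Real.pi * Complex.I * ((n : ℂ) + 1 / 2) ^ 2 * ((t:ℂ) * Complex.I)) *
        Complex.exp (2 * Real.pi * Complex.I * ((n : ℂ) + 1 / 2) * z)
      = ∑' n : ℤ, Complex.exp (-(Real.pi/4 : ℂ) * t) *
          (Complex.exp ((Real.pi:ℂ) * Complex.I * z) *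
            ((((-1:ℂ)^n) * Complex.exp (2 * (Real.pi:ℂ) * Complex.I * (n:ℂ) * z)) *
              Complex.exp (-(cQ n : ℂ) * t))) := by
        apply tsum_congr
        intro n
        have hA : Complex.exp (Real.pi * Complex.I * ((n : ℂ) + 1 / 2) ^ 2 * ((t:ℂ) * Complex.I))
            = Complex.exp (-(Real.pi/4 : ℂ) * t) * Complex.exp (-(cQ n : ℂ) * t) := by
          rw [← Complex.exp_add]
          congr 1
          unfold cQ
          push_cast
          linear_combination (Real.pi : ℂ) * t * ((n:ℂ) + 1/2)^2 * Complex.I_mul_I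
        have hB : Complex.exp (2 * Real.pi * Complex.I * ((n : ℂ) + 1 / 2) * z)
            = Complex.exp ((Real.pi:ℂ) * Complex.I * z) *
              Complex.exp (2 * (Real.pi:ℂ) * Complex.I * (n:ℂ) * z) := by
          rw [← Complex.exp_add]
          congr 1
          ring
        rw [hA, hB]
        ring
    _ = _ := by rw [tsum_mul_left, tsum_mul_left]

lemma theta3_factor (t : ℝ) (z : ℂ) :
    theta3 ((t:ℂ) * Complex.I) z =
      ∑' n : ℤ, ((1:ℂ) * Complex.exp (2 * (Real.pi:ℂ) * Complex.I * (n:ℂ) * z)) *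
        Complex.exp (-(cS n : ℂ) * t) := by
  unfold theta3
  apply tsum_congr
  intro n
  have hA : Complex.exp (Real.pi * Complex.I * (n : ℂ) ^ 2 * ((t:ℂ) * Complex.I))
      = Complex.exp (-(cS n : ℂ) * t) := by
    congr 1
    unfold cS
    push_cast
    linear_combination (Real.pi : ℂ) * t * (n:ℂ)^2 * Complex.I_mul_I
  rw [hA]
  ring

lemma theta4_factor (t : ℝ) (z : ℂ) :
    theta4 ((t:ℂ) * Complex.I) z =
      ∑' n : ℤ, (((-1:ℂ)^n) * Complex.exp (2 * (Real.pi:ℂ) * Complex.I * (n:ℂ) * z)) *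
        Complex.exp (-(cS n : ℂ) * t) := by
  unfold theta4
  apply tsum_congr
  intro n
  have hA : Complex.exp (Real.pi * Complex.I * (n : ℂ) ^ 2 * ((t:ℂ) * Complex.I))
      = Complex.exp (-(cS n : ℂ) * t) := by
    congr 1
    unfold cS
    push_cast
    linear_combination (Real.pi : ℂ) * t * (n:ℂ)^2 * Complex.I_mul_I
  rw [hA]
  ring

lemma eta_factor (t : ℝ) :
    dedekindEta ((t:ℂ) * Complex.I) ^ 6 = Complex.exp (-(Real.pi/2 : ℂ) * t) *
      (∏' n : ℕ, (1 - Complex.exp (2 * Real.pi * Complex.I * ((n : ℂ) + 1) *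
        ((t:ℂ) * Complex.I)))) ^ 6 := by
  unfold dedekindEta
  rw [mul_pow]
  congr 1
  rw [← Complex.exp_nat_mul]
  congr 1
  push_cast
  linear_combination (Real.pi : ℂ) * t / 2 * Complex.I_mul_I

lemma tendsto_E4 : Tendsto (fun t : ℝ => E4 ((t:ℂ) * Complex.I)) atTop (nhds 1) := by
  have hfac : ∀ t : ℝ, E4 ((t:ℂ) * Complex.I) = 1 + 240 * ∑' n : ℕ,
      (∑ d ∈ (n + 1).divisors, (d : ℂ) ^ 3) *
        Complex.exp (-((2 * Real.pi * ((n:ℝ) + 1) : ℝ) : ℂ) * t) := by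
    intro t
    unfold E4
    congr 2
    apply tsum_congr
    intro n
    congr 2
    push_cast
    linear_combination (2 * (Real.pi:ℂ) * ((n:ℂ) + 1) * t) * Complex.I_mul_I
  have hsum : Summable (fun n : ℕ => ‖(∑ d ∈ (n + 1).divisors, (d : ℂ) ^ 3)‖ *
      Real.exp (-(2 * Real.pi * ((n:ℝ) + 1)))) := by
    have hgeo : Summable (fun n : ℕ => ((n:ℝ))^4 * (Real.exp (-(2*Real.pi)))^n) := by
      apply summable_pow_mul_geometric_of_norm_lt_one
      rw [Real.norm_eq_abs, abs_of_pos (Real.exp_pos _)]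
      rw [Real.exp_lt_one_iff]
      have : (0:ℝ) < 2*Real.pi := by positivity
      linarith
    have hgeo' : Summable (fun n : ℕ => (((n:ℝ)+1))^4 * (Real.exp (-(2*Real.pi)))^(n+1)) := by
      have := (summable_nat_add_iff 1).mpr hgeo
      refine this.congr fun n => ?_
      push_cast
      ring
    apply Summable.of_nonneg_of_le (fun n => by positivity) _ hgeo'
    intro n
    have hexp : Real.exp (-(2 * Real.pi * ((n:ℝ) + 1))) = (Real.exp (-(2*Real.pi)))^(n+1) := by
      rw [← Real.exp_nat_mul]
      congr 1
      push_cast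
      ring
    rw [hexp]
    apply mul_le_mul_of_nonneg_right _ (by positivity)
    calc ‖(∑ d ∈ (n + 1).divisors, (d : ℂ) ^ 3)‖ ≤ ∑ d ∈ (n + 1).divisors, ‖((d:ℂ)) ^ 3‖ :=
          norm_sum_le _ _
      _ = ∑ d ∈ (n + 1).divisors, ((d:ℝ)) ^ 3 := by
          apply Finset.sum_congr rfl
          intro d _
          simp [Complex.norm_natCast]
      _ ≤ (n + 1).divisors.card • (((n:ℝ)+1)) ^ 3 := by
          apply Finset.sum_le_card_nsmul
          intro d hd
          have hle : d ≤ n + 1 := Nat.divisor_le hd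
          have : (d:ℝ) ≤ (n:ℝ) + 1 := by exact_mod_cast hle
          have hd0 : (0:ℝ) ≤ (d:ℝ) := by positivity
          exact pow_le_pow_left₀ hd0 this 3
      _ ≤ ((n:ℝ)+1)^4 := by
          rw [nsmul_eq_mul]
          have hcard : (n + 1).divisors.card ≤ n + 1 := by
            have hsub : (n + 1).divisors ⊆ Finset.Icc 1 (n + 1) := by
              intro d hd
              rw [Finset.mem_Icc]
              exact ⟨Nat.pos_of_mem_divisors hd, Nat.divisor_le hd⟩
            calc (n + 1).divisors.card ≤ (Finset.Icc 1 (n + 1)).card := Finset.card_le_card hsub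
              _ = n + 1 := by rw [Nat.card_Icc]; omega
          have : ((n + 1).divisors.card : ℝ) ≤ (n:ℝ) + 1 := by exact_mod_cast hcard
          nlinarith [pow_nonneg (by positivity : (0:ℝ) ≤ (n:ℝ)+1) 3]
  have H := tendsto_tsum_exp (fun n : ℕ => (∑ d ∈ (n + 1).divisors, (d : ℂ) ^ 3))
    (fun n : ℕ => 2 * Real.pi * ((n:ℝ) + 1)) (fun n => by positivity) hsum
  have hzero : (∑' n : ℕ, if 2 * Real.pi * ((n:ℝ) + 1) = 0 then
      (∑ d ∈ (n + 1).divisors, (d : ℂ) ^ 3) else 0) = 0 := by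
    have heq : (fun n : ℕ => if 2 * Real.pi * ((n:ℝ) + 1) = 0 then
        (∑ d ∈ (n + 1).divisors, (d : ℂ) ^ 3) else 0) = fun _ : ℕ => (0:ℂ) := by
      funext n
      rw [if_neg]
      have : (0:ℝ) < 2 * Real.pi * ((n:ℝ) + 1) := by positivity
      exact this.ne'
    rw [heq, tsum_zero]
  rw [hzero] at H
  have := ((H.const_mul (240:ℂ)).const_add 1)
  simpa using this.congr fun t => (hfac t).symm

lemma log_one_sub_bound {x : ℝ} (h0 : 0 ≤ x) (h2 : x ≤ 1/2) : |Real.log (1 - x)| ≤ 2 * x := by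
  have h1 : (0:ℝ) < 1 - x := by linarith
  have hle : Real.log (1 - x) ≤ 0 := Real.log_nonpos (by linarith) (by linarith)
  rw [abs_of_nonpos hle, neg_le]
  rw [Real.le_log_iff_exp_le h1]
  have hE : 2*x + 1 ≤ Real.exp (2*x) := Real.add_one_le_exp (2*x)
  have hpos : (0:ℝ) < Real.exp (2*x) := Real.exp_pos _
  rw [Real.exp_neg, inv_eq_one_div, div_le_iff₀ hpos]
  nlinarith [mul_le_mul_of_nonneg_left hE (by linarith : (0:ℝ) ≤ 1 - x)]

lemma exp_neg_two_pi_le_half : Real.exp (-(2*Real.pi)) ≤ 1/2 := by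
  have h1 : (2:ℝ) ≤ 2*Real.pi + 1 := by nlinarith [Real.pi_gt_three]
  have h2 : 2*Real.pi + 1 ≤ Real.exp (2*Real.pi) := Real.add_one_le_exp _
  rw [Real.exp_neg, inv_eq_one_div, div_le_iff₀ (Real.exp_pos _)]
  nlinarith

lemma tendsto_etaprod :
    Tendsto (fun t : ℝ => ∏' n : ℕ, (1 - Complex.exp (2 * Real.pi * Complex.I *
      ((n : ℂ) + 1) * ((t:ℂ) * Complex.I)))) atTop (nhds 1) := by
  set x : ℕ → ℝ → ℝ := fun n t => Real.exp (-(2 * Real.pi * ((n:ℝ) + 1) * t)) with hx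
  set B : ℕ → ℝ := fun n => 2 * Real.exp (-(2 * Real.pi * ((n:ℝ) + 1))) with hB
  have hx_pos : ∀ n t, 0 < x n t := fun n t => Real.exp_pos _
  have hx_mono : ∀ n, ∀ t : ℝ, 1 ≤ t → x n t ≤ Real.exp (-(2 * Real.pi * ((n:ℝ) + 1))) := by
    intro n t ht
    apply Real.exp_le_exp.mpr
    have h1 : (0:ℝ) < 2 * Real.pi * ((n:ℝ)+1) := by positivity
    nlinarith
  have hx_half : ∀ n, ∀ t : ℝ, 1 ≤ t → x n t ≤ 1/2 := by
    intro n t ht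
    refine (hx_mono n t ht).trans ((Real.exp_le_exp.mpr ?_).trans exp_neg_two_pi_le_half)
    have hn : (0:ℝ) ≤ (n:ℝ) := Nat.cast_nonneg n
    nlinarith [Real.pi_pos]
  have hsumB : Summable B := by
    apply Summable.mul_left
    have hlt : Real.exp (-(2*Real.pi)) < 1 := by
      rw [Real.exp_lt_one_iff]
      have h2pi : (0:ℝ) < 2*Real.pi := by positivity
      linarith
    have hgeo : Summable (fun n : ℕ => (Real.exp (-(2*Real.pi)))^n) :=
      summable_geometric_of_lt_one (Real.exp_pos _).le hlt
    have := (summable_nat_add_iff 1).mpr hgeo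
    refine this.congr fun n => ?_
    rw [← Real.exp_nat_mul]
    congr 1
    push_cast
    ring
  have hfac : ∀ (n : ℕ) (t : ℝ), 1 - Complex.exp (2 * Real.pi * Complex.I *
      ((n : ℂ) + 1) * ((t:ℂ) * Complex.I)) = ((1 - x n t : ℝ) : ℂ) := by
    intro n t
    have hexp : Complex.exp (2 * Real.pi * Complex.I * ((n : ℂ) + 1) * ((t:ℂ) * Complex.I))
        = ((x n t : ℝ) : ℂ) := by
      rw [hx]
      simp only []
      rw [Complex.ofReal_exp]
      congr 1
      push_cast
      linear_combination (2 * (Real.pi:ℂ) * ((n:ℂ) + 1) * t) * Complex.I_mul_I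
    rw [hexp]
    push_cast
    ring
  have hlogsum : ∀ t : ℝ, 1 ≤ t → Summable (fun n : ℕ => Real.log (1 - x n t)) := by
    intro t ht
    apply Summable.of_norm
    apply Summable.of_nonneg_of_le (fun n => norm_nonneg _) _ hsumB
    intro n
    rw [Real.norm_eq_abs]
    calc |Real.log (1 - x n t)| ≤ 2 * x n t :=
          log_one_sub_bound (hx_pos n t).le (hx_half n t ht)
      _ ≤ B n := by
          simp only [hB]
          have := hx_mono n t ht
          linarith
  have hlogtendsto : Tendsto (fun t : ℝ => ∑' n : ℕ, Real.log (1 - x n t)) atTop (nhds 0) := by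
    have h0 : (0:ℝ) = ∑' _ : ℕ, (0:ℝ) := tsum_zero.symm
    rw [h0]
    apply tendsto_tsum_of_dominated_convergence hsumB
    · intro n
      have hxlim : Tendsto (fun t : ℝ => x n t) atTop (nhds 0) := by
        apply Real.tendsto_exp_atBot.comp
        have hpos : (0:ℝ) < 2 * Real.pi * ((n:ℝ)+1) := by positivity
        have : Tendsto (fun t : ℝ => 2 * Real.pi * ((n:ℝ)+1) * t) atTop atTop :=
          tendsto_id.const_mul_atTop hpos
        simpa [Function.comp_def] using tendsto_neg_atTop_atBot.comp this
      have hcont : ContinuousAt Real.log ((1:ℝ) - 0) := Real.continuousAt_log (by norm_num)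
      have := hcont.tendsto.comp (tendsto_const_nhds.sub hxlim)
      simpa [Function.comp_def] using this
    · filter_upwards [eventually_ge_atTop (1:ℝ)] with t ht n
      rw [Real.norm_eq_abs]
      calc |Real.log (1 - x n t)| ≤ 2 * x n t :=
            log_one_sub_bound (hx_pos n t).le (hx_half n t ht)
        _ ≤ B n := by
            simp only [hB]
            have := hx_mono n t ht
            linarith
  have hEE : (fun t : ℝ => ((Real.exp (∑' n : ℕ, Real.log (1 - x n t)) : ℝ) : ℂ))
      =ᶠ[atTop] (fun t : ℝ => ∏' n : ℕ, (1 - Complex.exp (2 * Real.pi * Complex.I *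
        ((n : ℂ) + 1) * ((t:ℂ) * Complex.I)))) := by
    filter_upwards [eventually_ge_atTop (1:ℝ)] with t ht
    have hpos : ∀ n, (0:ℝ) < 1 - x n t := fun n => by
      have := hx_half n t ht; linarith
    have hs := hlogsum t ht
    have hfun : (Real.exp ∘ fun n : ℕ => Real.log (1 - x n t)) = fun n : ℕ => 1 - x n t :=
      funext fun n => Real.exp_log (hpos n)
    have hp : HasProd (fun n : ℕ => 1 - x n t)
        (Real.exp (∑' n : ℕ, Real.log (1 - x n t))) := hfun ▸ hs.hasSum.rexp
    have h1 : (∏' n : ℕ, ((1 - x n t : ℝ) : ℂ)) =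
        ((Real.exp (∑' n : ℕ, Real.log (1 - x n t)) : ℝ) : ℂ) := by
      have hmap := hp.multipliable.map_tprod (Complex.ofRealHom : ℝ →+* ℂ)
        Complex.continuous_ofReal
      rw [hp.tprod_eq] at hmap
      exact hmap.symm
    rw [← h1]
    exact tprod_congr fun n => (hfac n t).symm
  apply Tendsto.congr' hEE
  have H2 := (Complex.continuous_ofReal.tendsto (Real.exp 0)).comp
    ((Real.continuous_exp.tendsto 0).comp hlogtendsto)
  rw [show ((Real.exp 0 : ℝ) : ℂ) = 1 by norm_num] at H2
  exact H2

noncomputable def SQ (u : ℂ) (t : ℝ) : ℂ :=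
  ∑' n : ℤ, ((1:ℂ) * Complex.exp (2 * (Real.pi:ℂ) * Complex.I * (n:ℂ) * u)) *
    Complex.exp (-(cQ n : ℂ) * t)

noncomputable def SQm (u : ℂ) (t : ℝ) : ℂ :=
  ∑' n : ℤ, (((-1:ℂ)^n) * Complex.exp (2 * (Real.pi:ℂ) * Complex.I * (n:ℂ) * u)) *
    Complex.exp (-(cQ n : ℂ) * t)

noncomputable def SS (u : ℂ) (t : ℝ) : ℂ :=
  ∑' n : ℤ, ((1:ℂ) * Complex.exp (2 * (Real.pi:ℂ) * Complex.I * (n:ℂ) * u)) *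
    Complex.exp (-(cS n : ℂ) * t)

noncomputable def SSm (u : ℂ) (t : ℝ) : ℂ :=
  ∑' n : ℤ, (((-1:ℂ)^n) * Complex.exp (2 * (Real.pi:ℂ) * Complex.I * (n:ℂ) * u)) *
    Complex.exp (-(cS n : ℂ) * t)

noncomputable def Pinf (t : ℝ) : ℂ :=
  ∏' n : ℕ, (1 - Complex.exp (2 * Real.pi * Complex.I * ((n : ℂ) + 1) * ((t:ℂ) * Complex.I)))

lemma norm_neg_one_zpow (n : ℤ) : ‖((-1:ℂ) ^ n : ℂ)‖ = 1 := by
  rw [norm_zpow]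
  simp

lemma tendsto_SQ (u : ℂ) : Tendsto (SQ u) atTop
    (nhds ((1:ℂ) + 1 * Complex.exp (2 * (Real.pi:ℂ) * Complex.I * ((-1:ℤ):ℂ) * u))) :=
  tendsto_S_cQ u (fun _ => 1) (fun _ => by simp)

lemma tendsto_SQm (u : ℂ) : Tendsto (SQm u) atTop
    (nhds (((-1:ℂ)^(0:ℤ)) + ((-1:ℂ)^(-1:ℤ)) *
      Complex.exp (2 * (Real.pi:ℂ) * Complex.I * ((-1:ℤ):ℂ) * u))) :=
  tendsto_S_cQ u (fun n => (-1:ℂ)^n) norm_neg_one_zpow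

lemma tendsto_SS (u : ℂ) : Tendsto (SS u) atTop (nhds (1:ℂ)) :=
  tendsto_S_cS u (fun _ => 1) (fun _ => by simp)

lemma tendsto_SSm (u : ℂ) : Tendsto (SSm u) atTop (nhds ((-1:ℂ)^(0:ℤ))) :=
  tendsto_S_cS u (fun n => (-1:ℂ)^n) norm_neg_one_zpow

lemma tendsto_Pinf : Tendsto Pinf atTop (nhds 1) := tendsto_etaprod

lemma key_eq (t : ℝ) (z : ℂ) :
    E4 ((t:ℂ) * Complex.I) * phi01 ((t:ℂ) * Complex.I) z *
        phim21 ((t:ℂ) * Complex.I) z ^ 2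
      = E4 ((t:ℂ) * Complex.I) *
        (4 * (((Complex.exp ((Real.pi:ℂ) * Complex.I * z) * SQ z t) /
            (Complex.exp ((Real.pi:ℂ) * Complex.I * (0:ℂ)) * SQ 0 t)) ^ 2
          + (SS z t / SS 0 t) ^ 2 + (SSm z t / SSm 0 t) ^ 2)) *
        ((Complex.exp ((Real.pi:ℂ) * Complex.I * z) ^ 2 * (SQm z t) ^ 2) / (Pinf t) ^ 6) ^ 2 := by
  unfold phi01 phim21
  rw [theta1_factor t z, theta2_factor t z, theta2_factor t 0, theta3_factor t z,
    theta3_factor t 0, theta4_factor t z, theta4_factor t 0, eta_factor t]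
  unfold SQ SQm SS SSm Pinf
  set F := Complex.exp (-(Real.pi/4 : ℂ) * t) with hFdef
  set G := Complex.exp (-(Real.pi/2 : ℂ) * t) with hGdef
  have hF : F ≠ 0 := Complex.exp_ne_zero _
  have hG : G ≠ 0 := Complex.exp_ne_zero _
  have hFsq : F ^ 2 = G := by
    rw [hFdef, hGdef, ← Complex.exp_nat_mul]
    congr 1
    push_cast
    ring
  set w := Complex.exp ((Real.pi:ℂ) * Complex.I * z)
  set w0 := Complex.exp ((Real.pi:ℂ) * Complex.I * (0:ℂ))
  set a := ∑' n : ℤ, ((1:ℂ) * Complex.exp (2 * (Real.pi:ℂ) * Complex.I * (n:ℂ) * z)) *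
    Complex.exp (-(cQ n : ℂ) * t)
  set b := ∑' n : ℤ, ((1:ℂ) * Complex.exp (2 * (Real.pi:ℂ) * Complex.I * (n:ℂ) * (0:ℂ))) *
    Complex.exp (-(cQ n : ℂ) * t)
  set g := ∑' n : ℤ, (((-1:ℂ)^n) * Complex.exp (2 * (Real.pi:ℂ) * Complex.I * (n:ℂ) * z)) *
    Complex.exp (-(cQ n : ℂ) * t)
  set p := ∏' n : ℕ, (1 - Complex.exp (2 * Real.pi * Complex.I * ((n : ℂ) + 1) *
    ((t:ℂ) * Complex.I)))
  have step1 : F * (w * a) / (F * (w0 * b)) = (w * a) / (w0 * b) :=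
    mul_div_mul_left _ _ hF
  have step2 : -(-Complex.I * (F * (w * g))) ^ 2 / (G * p ^ 6) = (w ^ 2 * g ^ 2) / p ^ 6 := by
    have hnum : -(-Complex.I * (F * (w * g))) ^ 2 = G * (w ^ 2 * g ^ 2) := by
      have h1 : -(-Complex.I * (F * (w * g))) ^ 2
          = -(Complex.I ^ 2) * (F ^ 2 * (w ^ 2 * g ^ 2)) := by ring
      rw [h1, Complex.I_sq, hFsq]
      ring
    rw [hnum, mul_div_mul_left _ _ hG]
  rw [step1, step2]

/-- The q⁰-coefficient of E₄·φ_{0,1}·φ_{-2,1}² is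
y⁻³ + 6y⁻² - 33y⁻¹ + 52 - 33y + 6y² + y³. -/
theorem E4_phi01_phim21_sq_q0_coefficient (z : ℂ) :
    Filter.Tendsto
      (fun t : ℝ => E4 ((t : ℂ) * Complex.I) * phi01 ((t : ℂ) * Complex.I) z *
        phim21 ((t : ℂ) * Complex.I) z ^ 2) Filter.atTop
      (nhds ((Complex.exp (2 * Real.pi * Complex.I * z))⁻¹ ^ 3 +
        6 * (Complex.exp (2 * Real.pi * Complex.I * z))⁻¹ ^ 2 -
        33 * (Complex.exp (2 * Real.pi * Complex.I * z))⁻¹ + 52 -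
        33 * Complex.exp (2 * Real.pi * Complex.I * z) +
        6 * Complex.exp (2 * Real.pi * Complex.I * z) ^ 2 +
        Complex.exp (2 * Real.pi * Complex.I * z) ^ 3)) := by
  set y := Complex.exp (2 * Real.pi * Complex.I * z) with hydef
  set w := Complex.exp ((Real.pi:ℂ) * Complex.I * z) with hwdef
  -- limits of the building blocks
  have hden2 : Complex.exp ((Real.pi:ℂ) * Complex.I * (0:ℂ)) *
      ((1:ℂ) + 1 * Complex.exp (2 * (Real.pi:ℂ) * Complex.I * ((-1:ℤ):ℂ) * (0:ℂ))) = 2 := by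
    simp
    norm_num
  have h1 : Tendsto (fun t : ℝ => (w * SQ z t) /
      (Complex.exp ((Real.pi:ℂ) * Complex.I * (0:ℂ)) * SQ 0 t)) atTop
      (nhds ((w * ((1:ℂ) + 1 * Complex.exp (2 * (Real.pi:ℂ) * Complex.I * ((-1:ℤ):ℂ) * z))) /
        (Complex.exp ((Real.pi:ℂ) * Complex.I * (0:ℂ)) *
          ((1:ℂ) + 1 * Complex.exp (2 * (Real.pi:ℂ) * Complex.I * ((-1:ℤ):ℂ) * (0:ℂ)))))) := by
    refine (tendsto_const_nhds.mul (tendsto_SQ z)).div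
      (tendsto_const_nhds.mul (tendsto_SQ 0)) ?_
    rw [hden2]
    norm_num
  have h3 : Tendsto (fun t : ℝ => SS z t / SS 0 t) atTop (nhds ((1:ℂ)/1)) :=
    (tendsto_SS z).div (tendsto_SS 0) one_ne_zero
  have h4 : Tendsto (fun t : ℝ => SSm z t / SSm 0 t) atTop
      (nhds ((((-1:ℂ)^(0:ℤ)) : ℂ) / ((-1:ℂ)^(0:ℤ)))) := by
    refine (tendsto_SSm z).div (tendsto_SSm 0) ?_
    norm_num
  have hm : Tendsto (fun t : ℝ => (w ^ 2 * (SQm z t) ^ 2) / (Pinf t) ^ 6) atTop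
      (nhds ((w ^ 2 * (((-1:ℂ)^(0:ℤ)) + ((-1:ℂ)^(-1:ℤ)) *
          Complex.exp (2 * (Real.pi:ℂ) * Complex.I * ((-1:ℤ):ℂ) * z)) ^ 2) / (1:ℂ) ^ 6)) := by
    refine (tendsto_const_nhds.mul ((tendsto_SQm z).pow 2)).div (tendsto_Pinf.pow 6) ?_
    norm_num
  have Full := (tendsto_E4.mul ((((h1.pow 2).add (h3.pow 2)).add (h4.pow 2)).const_mul
    (4:ℂ))).mul (hm.pow 2)
  have hlim : (1:ℂ) * (4 * (((w * ((1:ℂ) + 1 * Complex.exp (2 * (Real.pi:ℂ) * Complex.I *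
        ((-1:ℤ):ℂ) * z))) / (Complex.exp ((Real.pi:ℂ) * Complex.I * (0:ℂ)) *
          ((1:ℂ) + 1 * Complex.exp (2 * (Real.pi:ℂ) * Complex.I * ((-1:ℤ):ℂ) * (0:ℂ))))) ^ 2
        + ((1:ℂ)/1) ^ 2 + ((((-1:ℂ)^(0:ℤ)) : ℂ) / ((-1:ℂ)^(0:ℤ))) ^ 2)) *
      ((w ^ 2 * (((-1:ℂ)^(0:ℤ)) + ((-1:ℂ)^(-1:ℤ)) *
          Complex.exp (2 * (Real.pi:ℂ) * Complex.I * ((-1:ℤ):ℂ) * z)) ^ 2) / (1:ℂ) ^ 6) ^ 2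
      = y⁻¹ ^ 3 + 6 * y⁻¹ ^ 2 - 33 * y⁻¹ + 52 - 33 * y + 6 * y ^ 2 + y ^ 3 := by
    have hy : y ≠ 0 := Complex.exp_ne_zero _
    have hyinv : Complex.exp (2 * (Real.pi:ℂ) * Complex.I * ((-1:ℤ):ℂ) * z) = y⁻¹ := by
      rw [hydef, ← Complex.exp_neg]
      congr 1
      push_cast
      ring
    have hz0 : Complex.exp (2 * (Real.pi:ℂ) * Complex.I * ((-1:ℤ):ℂ) * (0:ℂ)) = 1 := by
      simp
    have hp0 : Complex.exp ((Real.pi:ℂ) * Complex.I * (0:ℂ)) = 1 := by simp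
    have hw2 : w ^ 2 = y := by
      rw [hwdef, hydef, pow_two, ← Complex.exp_add]
      congr 1
      ring
    rw [hyinv, hz0, hp0, div_pow, mul_pow, hw2]
    norm_num
    field_simp
    ring
  rw [hlim] at Full
  exact Full.congr fun t => (key_eq t z).symm
end

section
/- For every z ∈ ℂ, with y = e^{2πiz}, the function E₆(it)·φ_{−2,1}(it, z)³ tends to y⁻³ − 6y⁻² + 15y⁻¹ − 20 + 15y − 6y² + y³ as the real parameter t tends to +∞. -/
open Complex Filter Topology

lemma tendsto_exp_const_sub : ∀ T : ℝ, Filter.Tendsto (fun t : ℝ => Real.exp (T - t)) Filter.atTop (nhds 0) := by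
  intro T
  apply Real.tendsto_exp_atBot.comp
  exact (tendsto_atBot_add_const_left atTop T tendsto_neg_atTop_atBot).congr (fun t => (sub_eq_add_neg T t).symm)

lemma master {ι : Type*} (F : ℝ → ι → ℂ) (c : ι → ℝ) (T : ℝ) (hc : Summable c)
    (hb : ∀ t, T ≤ t → ∀ i, ‖F t i‖ ≤ c i * Real.exp (T - t)) :
    Filter.Tendsto (fun t => ∑' i, F t i) Filter.atTop (nhds 0) := by
  refine squeeze_zero_norm' (a := fun t => (∑' i, c i) * Real.exp (T - t)) ?_ ?_
  · filter_upwards [eventually_ge_atTop T] with t ht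
    have hsn : Summable fun i => ‖F t i‖ :=
      Summable.of_nonneg_of_le (fun i => norm_nonneg _) (hb t ht) (hc.mul_right _)
    calc ‖∑' i, F t i‖ ≤ ∑' i, ‖F t i‖ := norm_tsum_le_tsum_norm hsn
      _ ≤ ∑' i, (c i * Real.exp (T - t)) := Summable.tsum_le_tsum (hb t ht) hsn (hc.mul_right _)
      _ = (∑' i, c i) * Real.exp (T - t) := tsum_mul_right
  · simpa using (tendsto_exp_const_sub T).const_mul (∑' i, c i)

lemma norm1 (n : ℤ) (t : ℝ) :
    ‖Complex.exp (Real.pi * Complex.I * ((n:ℂ)+1/2)^2 * ((t:ℂ)*Complex.I))‖ =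
      Real.exp (-(Real.pi * ((n:ℝ)+1/2)^2 * t)) := by
  rw [Complex.norm_exp]
  congr 1
  have h : (Real.pi * Complex.I * ((n:ℂ)+1/2)^2 * ((t:ℂ)*Complex.I)) =
      ((-(Real.pi * ((n:ℝ)+1/2)^2 * t) : ℝ) : ℂ) := by
    push_cast
    linear_combination ((Real.pi:ℂ) * ((n:ℂ)+1/2)^2 * (t:ℂ)) * Complex.I_mul_I
  rw [h, Complex.ofReal_re]

lemma norm2 (n : ℤ) (z : ℂ) :
    ‖Complex.exp (2 * Real.pi * Complex.I * ((n:ℂ)+1/2) * z)‖ =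
      Real.exp (-((2*(n:ℝ)+1) * Real.pi * z.im)) := by
  rw [Complex.norm_exp]
  congr 1
  have h : (2 * (Real.pi:ℂ) * Complex.I * ((n:ℂ)+1/2) * z) =
      (((2*(n:ℝ)+1) * Real.pi : ℝ):ℂ) * (Complex.I * z) := by push_cast; ring
  rw [h]
  simp [Complex.mul_re]

lemma norm4 (n : ℕ) (t : ℝ) :
    ‖Complex.exp (2 * Real.pi * Complex.I * ((n:ℂ)+1) * ((t:ℂ)*Complex.I))‖ =
      Real.exp (-(2 * Real.pi * ((n:ℝ)+1) * t)) := by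
  rw [Complex.norm_exp]
  congr 1
  have h : (2 * (Real.pi:ℂ) * Complex.I * ((n:ℂ)+1) * ((t:ℂ)*Complex.I)) =
      ((-(2 * Real.pi * ((n:ℝ)+1) * t) : ℝ) : ℂ) := by
    push_cast
    linear_combination (2 * (Real.pi:ℂ) * ((n:ℂ)+1) * (t:ℂ)) * Complex.I_mul_I
  rw [h, Complex.ofReal_re]

lemma exp_decay {n t : ℝ} (hn : 1 ≤ n) (ht : 1 ≤ t) :
    Real.exp (-(2*Real.pi*n*t)) ≤ Real.exp (-(2*Real.pi*n)) * Real.exp (1 - t) := by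
  rw [← Real.exp_add]
  apply Real.exp_le_exp.2
  have h1 : (0:ℝ) ≤ 2*Real.pi*n - 1 := by nlinarith [Real.pi_gt_three]
  nlinarith [mul_nonneg h1 (by linarith : (0:ℝ) ≤ t - 1)]

lemma sigma_bound (n : ℕ) : ‖∑ d ∈ (n + 1).divisors, (d : ℂ) ^ 5‖ ≤ ((n:ℝ)+2)^6 := by
  have hsub : (n+1).divisors ⊆ Finset.range (n+2) := by
    intro d hd
    simp only [Finset.mem_range]
    have := Nat.divisor_le hd
    omega
  calc ‖∑ d ∈ (n + 1).divisors, (d : ℂ) ^ 5‖ ≤ ∑ d ∈ (n + 1).divisors, ‖(d : ℂ) ^ 5‖ :=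
        norm_sum_le _ _
    _ ≤ ∑ d ∈ Finset.range (n+2), ‖(d : ℂ) ^ 5‖ := by
        apply Finset.sum_le_sum_of_subset_of_nonneg hsub
        intro _ _ _; positivity
    _ ≤ ∑ _d ∈ Finset.range (n+2), ((n:ℝ)+2)^5 := by
        apply Finset.sum_le_sum
        intro d hd
        rw [norm_pow, Complex.norm_natCast]
        have : (d:ℝ) ≤ (n:ℝ)+2 := by
          have := Finset.mem_range.1 hd; exact_mod_cast this.le
        gcongr
    _ = ((n:ℝ)+2) * ((n:ℝ)+2)^5 := by
        rw [Finset.sum_const, Finset.card_range]; push_cast; ring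
    _ = ((n:ℝ)+2)^6 := by ring

lemma summable_c6 : Summable (fun n : ℕ => ((n:ℝ)+2)^6 * Real.exp (-(2*Real.pi*((n:ℝ)+1)))) := by
  have hr : ‖Real.exp (-(2*Real.pi))‖ < 1 := by
    rw [Real.norm_eq_abs, abs_of_pos (Real.exp_pos _)]
    apply Real.exp_lt_one_iff.2
    have := Real.pi_pos; linarith
  have h := summable_pow_mul_geometric_of_norm_lt_one (R := ℝ) 6 hr
  have h2 : Summable (fun n : ℕ => ((n+2:ℕ):ℝ)^6 * Real.exp (-(2*Real.pi))^(n+2)) :=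
    (summable_nat_add_iff 2).2 h
  refine Summable.of_nonneg_of_le (fun n => by positivity) (fun n => ?_)
    (h2.mul_left (Real.exp (2*Real.pi)))
  have e1 : Real.exp (-(2*Real.pi*((n:ℝ)+1))) =
      Real.exp (2*Real.pi) * Real.exp (-(2*Real.pi))^(n+2) := by
    rw [← Real.exp_nat_mul, ← Real.exp_add]
    congr 1
    push_cast; ring
  rw [e1]
  apply le_of_eq
  push_cast
  ring

lemma E6_tendsto : Filter.Tendsto (fun t : ℝ => E6 ((t : ℂ) * Complex.I))
    Filter.atTop (nhds 1) := by
  have hS : Filter.Tendsto (fun t : ℝ => ∑' n : ℕ, (∑ d ∈ (n + 1).divisors, (d : ℂ) ^ 5) *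
      Complex.exp (2 * Real.pi * Complex.I * ((n : ℂ) + 1) * ((t:ℂ) * Complex.I)))
      Filter.atTop (nhds 0) := by
    apply master _ (fun n : ℕ => ((n:ℝ)+2)^6 * Real.exp (-(2*Real.pi*((n:ℝ)+1)))) 1 summable_c6
    intro t ht n
    rw [norm_mul, norm4]
    have h1 : (1:ℝ) ≤ (n:ℝ)+1 := by have := Nat.cast_nonneg (α := ℝ) n; linarith
    calc ‖∑ d ∈ (n + 1).divisors, (d : ℂ) ^ 5‖ * Real.exp (-(2 * Real.pi * ((n:ℝ)+1) * t))
        ≤ ((n:ℝ)+2)^6 * Real.exp (-(2 * Real.pi * ((n:ℝ)+1) * t)) := by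
          apply mul_le_mul_of_nonneg_right (sigma_bound n) (Real.exp_nonneg _)
      _ ≤ ((n:ℝ)+2)^6 * (Real.exp (-(2 * Real.pi * ((n:ℝ)+1))) * Real.exp (1 - t)) := by
          apply mul_le_mul_of_nonneg_left (exp_decay h1 ht) (by positivity)
      _ = ((n:ℝ)+2)^6 * Real.exp (-(2*Real.pi*((n:ℝ)+1))) * Real.exp (1 - t) := by ring
  have : Filter.Tendsto (fun t : ℝ => 1 - 504 * (∑' n : ℕ, (∑ d ∈ (n + 1).divisors, (d : ℂ) ^ 5) *
      Complex.exp (2 * Real.pi * Complex.I * ((n : ℂ) + 1) * ((t:ℂ) * Complex.I))))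
      Filter.atTop (nhds 1) := by
    have h0 : Filter.Tendsto (fun _ : ℝ => (1:ℂ)) Filter.atTop (nhds 1) := tendsto_const_nhds
    simpa using h0.sub (hS.const_mul 504)
  exact this

lemma exp_half_bound (t : ℝ) (ht : 1 ≤ t) (n : ℕ) :
    ‖Complex.exp (2*Real.pi*Complex.I*((n:ℂ)+1)*((t:ℂ)*Complex.I))‖ ≤ 1/2 := by
  rw [norm4]
  have h2 : Real.exp (-(2*Real.pi*((n:ℝ)+1)*t)) ≤ Real.exp (-1) := by
    apply Real.exp_le_exp.2
    have h4 : (1:ℝ) ≤ ((n:ℝ)+1)*t := by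
      nlinarith [mul_nonneg (Nat.cast_nonneg (α := ℝ) n) (by linarith : (0:ℝ) ≤ t)]
    nlinarith [Real.pi_gt_three, h4]
  have h3 : Real.exp (-1) ≤ 1/2 := by
    rw [Real.exp_neg]
    have h := Real.exp_one_gt_d9
    rw [inv_le_comm₀ (Real.exp_pos 1) (by norm_num)]
    norm_num
    linarith
  linarith

lemma eta_prod_tendsto : Filter.Tendsto (fun t : ℝ =>
    ∏' n : ℕ, (1 - Complex.exp (2 * Real.pi * Complex.I * ((n:ℂ)+1) * ((t:ℂ) * Complex.I))))
    Filter.atTop (nhds 1) := by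
  set c : ℕ → ℝ := fun n => (3/2) * (((n:ℝ)+2)^6 * Real.exp (-(2*Real.pi*((n:ℝ)+1)))) with hc_def
  have hc : Summable c := summable_c6.mul_left _
  have hne : ∀ t : ℝ, 1 ≤ t → ∀ n : ℕ,
      1 - Complex.exp (2*Real.pi*Complex.I*((n:ℂ)+1)*((t:ℂ)*Complex.I)) ≠ 0 := by
    intro t ht n
    apply sub_ne_zero_of_ne
    intro h
    have := exp_half_bound t ht n
    rw [← h] at this
    norm_num at this
  have hbound : ∀ t : ℝ, 1 ≤ t → ∀ n : ℕ,
      ‖Complex.log (1 - Complex.exp (2*Real.pi*Complex.I*((n:ℂ)+1)*((t:ℂ)*Complex.I)))‖ ≤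
        c n * Real.exp (1 - t) := by
    intro t ht n
    have h1 := exp_half_bound t ht n
    have hlog := Complex.norm_log_one_add_half_le_self
      (z := -(Complex.exp (2*Real.pi*Complex.I*((n:ℂ)+1)*((t:ℂ)*Complex.I)))) (by simpa using h1)
    rw [norm_neg] at hlog
    have h6 : (1:ℝ) ≤ ((n:ℝ)+2)^6 := one_le_pow₀ (by linarith [Nat.cast_nonneg (α := ℝ) n])
    have hn1 : (1:ℝ) ≤ (n:ℝ)+1 := by linarith [Nat.cast_nonneg (α := ℝ) n]
    calc ‖Complex.log (1 - Complex.exp (2*Real.pi*Complex.I*((n:ℂ)+1)*((t:ℂ)*Complex.I)))‖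
        ≤ 3/2 * ‖Complex.exp (2*Real.pi*Complex.I*((n:ℂ)+1)*((t:ℂ)*Complex.I))‖ := by
          simpa [sub_eq_add_neg] using hlog
      _ = 3/2 * Real.exp (-(2*Real.pi*((n:ℝ)+1)*t)) := by rw [norm4]
      _ ≤ 3/2 * (Real.exp (-(2*Real.pi*((n:ℝ)+1))) * Real.exp (1 - t)) := by
          apply mul_le_mul_of_nonneg_left (exp_decay hn1 ht) (by norm_num)
      _ ≤ c n * Real.exp (1 - t) := by
          rw [hc_def]
          simp only
          have hE := (Real.exp_pos (-(2*Real.pi*((n:ℝ)+1)))).le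
          have he := (Real.exp_pos (1-t)).le
          have key := mul_le_mul_of_nonneg_right (le_mul_of_one_le_left hE h6) he
          nlinarith [key]
  have hL : Filter.Tendsto (fun t : ℝ => ∑' n : ℕ,
      Complex.log (1 - Complex.exp (2*Real.pi*Complex.I*((n:ℂ)+1)*((t:ℂ)*Complex.I))))
      Filter.atTop (nhds 0) := master _ c 1 hc hbound
  have hexp : Filter.Tendsto (fun t : ℝ => Complex.exp (∑' n : ℕ,
      Complex.log (1 - Complex.exp (2*Real.pi*Complex.I*((n:ℂ)+1)*((t:ℂ)*Complex.I)))))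
      Filter.atTop (nhds 1) := by
    simpa [Function.comp_def] using (Complex.continuous_exp.tendsto 0).comp hL
  apply hexp.congr'
  filter_upwards [eventually_ge_atTop 1] with t ht
  have hsum : Summable (fun n : ℕ =>
      Complex.log (1 - Complex.exp (2*Real.pi*Complex.I*((n:ℂ)+1)*((t:ℂ)*Complex.I)))) :=
    Summable.of_norm_bounded (hc.mul_right _) (hbound t ht)
  have hps := hsum.hasSum.cexp
  have heq : (Complex.exp ∘ fun n : ℕ =>
      Complex.log (1 - Complex.exp (2*Real.pi*Complex.I*((n:ℂ)+1)*((t:ℂ)*Complex.I)))) =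
      fun n : ℕ => 1 - Complex.exp (2*Real.pi*Complex.I*((n:ℂ)+1)*((t:ℂ)*Complex.I)) :=
    funext fun n => Complex.exp_log (hne t ht n)
  rw [heq] at hps
  exact hps.tprod_eq.symm

lemma summable_cz : Summable (fun n : ℤ => Real.exp (-(2*Real.pi*(n.natAbs:ℝ)))) := by
  have hgeo : Summable (fun n : ℕ => Real.exp (-(2*Real.pi))^n) :=
    summable_geometric_of_lt_one (Real.exp_nonneg _)
      (Real.exp_lt_one_iff.2 (by nlinarith [Real.pi_gt_three]))
  apply Summable.of_nat_of_neg
  · apply hgeo.congr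
    intro n
    rw [← Real.exp_nat_mul]
    congr 1
    simp
    ring
  · apply hgeo.congr
    intro n
    rw [← Real.exp_nat_mul]
    congr 1
    simp
    ring

lemma theta_term_bound {n : ℤ} (h0 : n ≠ 0) (h1 : n ≠ -1) {b t : ℝ}
    (ht : 3*|b| + 2 ≤ t) :
    Real.pi*t/4 + -(Real.pi*((n:ℝ)+1/2)^2*t) + -((2*(n:ℝ)+1)*Real.pi*b) ≤
      -(2*Real.pi*(n.natAbs:ℝ)) + ((3*|b| + 2) - t) := by
  set m : ℝ := (n.natAbs : ℝ) with hm
  have hm1 : 1 ≤ m := by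
    rw [hm]
    have : 1 ≤ n.natAbs := by omega
    exact_mod_cast this
  have hB : m ≤ (n:ℝ)^2 + (n:ℝ) := by
    have hint : |n| ≤ n^2 + n := by
      rcases lt_or_ge n 0 with h | h
      · rw [abs_of_neg h]
        have hn2 : n ≤ -2 := by omega
        nlinarith
      · rw [abs_of_nonneg h]
        have h1n : 1 ≤ n := by omega
        nlinarith
    rw [hm]
    calc ((n.natAbs : ℕ) : ℝ) = ((|n| : ℤ) : ℝ) := by
          rw [Int.abs_eq_natAbs]; push_cast [Nat.cast_natAbs]; rfl
      _ ≤ ((n^2 + n : ℤ) : ℝ) := by exact_mod_cast hint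
      _ = (n:ℝ)^2 + (n:ℝ) := by push_cast; ring
  have habsn : |(n:ℝ)| = m := by
    rw [hm, Nat.cast_natAbs]
    exact Int.cast_abs.symm
  have hC : -((2*(n:ℝ)+1)*b) ≤ (2*m+1)*|b| := by
    calc -((2*(n:ℝ)+1)*b) ≤ |(2*(n:ℝ)+1)*b| := neg_le_abs _
      _ = |2*(n:ℝ)+1| * |b| := abs_mul _ _
      _ ≤ (2*|(n:ℝ)|+1)*|b| := by
          apply mul_le_mul_of_nonneg_right _ (abs_nonneg b)
          calc |2*(n:ℝ)+1| ≤ |2*(n:ℝ)| + |(1:ℝ)| := abs_add_le _ _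
            _ = 2*|(n:ℝ)| + 1 := by rw [abs_mul]; norm_num
      _ = (2*m+1)*|b| := by rw [habsn]
  have hpi := Real.pi_gt_three
  have hb0 : 0 ≤ |b| := abs_nonneg b
  have ht2 : 0 ≤ t - (3*|b|+2) := by linarith
  have htpos : (0:ℝ) < t := by linarith
  have h1' : Real.pi*m*t ≤ Real.pi*((n:ℝ)^2+(n:ℝ))*t := by
    have := mul_le_mul_of_nonneg_left hB (by positivity : (0:ℝ) ≤ Real.pi)
    nlinarith
  have h2' : -((2*(n:ℝ)+1)*Real.pi*b) ≤ 3*m*|b| * Real.pi := by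
    have hx := mul_le_mul_of_nonneg_right hC (by positivity : (0:ℝ) ≤ Real.pi)
    have h2m : (2*m+1)*|b| ≤ 3*m*|b| := by nlinarith
    nlinarith [Real.pi_pos]
  have h3' : -(Real.pi*m*t) + Real.pi*m*(3*|b|) ≤ -(2*Real.pi*m) + ((3*|b|+2) - t) := by
    have hkey : (t - (3*|b|+2)) ≤ Real.pi*m*(t - (3*|b|+2)) := by
      nlinarith [mul_nonneg (by nlinarith : (0:ℝ) ≤ Real.pi*m - 1) ht2]
    nlinarith
  nlinarith [h1', h2', h3']

lemma theta_tendsto (z : ℂ) : Filter.Tendsto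
    (fun t : ℝ => Complex.exp ((Real.pi:ℂ)*(t:ℂ)/4) * theta1 ((t:ℂ)*Complex.I) z)
    Filter.atTop
    (nhds (-Complex.I * (Complex.exp (Real.pi*Complex.I*z) -
      Complex.exp (-(Real.pi*Complex.I*z))))) := by
  set T : ℝ := 3*|z.im| + 2 with hT
  set f : ℝ → ℤ → ℂ := fun t n => (-1:ℂ)^n *
    Complex.exp (Real.pi*Complex.I*((n:ℂ)+1/2)^2*((t:ℂ)*Complex.I)) *
    Complex.exp (2*Real.pi*Complex.I*((n:ℂ)+1/2)*z) with hf
  set F : ℝ → ℤ → ℂ := fun t n => Complex.exp ((Real.pi:ℂ)*(t:ℂ)/4) * f t n with hF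
  set G : ℝ → ℤ → ℂ := fun t n => if n = 0 then 0 else if n = -1 then 0 else F t n with hG
  have hnormexp : ∀ t : ℝ, ‖Complex.exp ((Real.pi:ℂ)*(t:ℂ)/4)‖ = Real.exp (Real.pi*t/4) := by
    intro t
    have h : ((Real.pi:ℂ)*(t:ℂ)/4) = ((Real.pi*t/4 : ℝ):ℂ) := by push_cast; ring
    rw [Complex.norm_exp]
    congr 1
    rw [h, Complex.ofReal_re]
  have hFnorm : ∀ t : ℝ, ∀ n : ℤ, ‖F t n‖ =
      Real.exp (Real.pi*t/4) * (Real.exp (-(Real.pi*((n:ℝ)+1/2)^2*t)) *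
        Real.exp (-((2*(n:ℝ)+1)*Real.pi*z.im))) := by
    intro t n
    simp only [hF, hf]
    rw [norm_mul, norm_mul, norm_mul, hnormexp, norm1, norm2]
    have hz : ‖(-1:ℂ)^n‖ = 1 := by
      rw [norm_zpow]
      simp
    rw [hz]
    ring
  have hGbound : ∀ t : ℝ, T ≤ t → ∀ n : ℤ,
      ‖G t n‖ ≤ Real.exp (-(2*Real.pi*(n.natAbs:ℝ))) * Real.exp (T - t) := by
    intro t ht n
    simp only [hG]
    by_cases h0 : n = 0
    · subst h0
      rw [if_pos rfl, norm_zero]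
      positivity
    by_cases h1 : n = -1
    · subst h1
      rw [if_neg (by decide), if_pos rfl, norm_zero]
      positivity
    rw [if_neg h0, if_neg h1, hFnorm, ← Real.exp_add, ← Real.exp_add, ← Real.exp_add]
    apply Real.exp_le_exp.2
    rw [hT] at ht ⊢
    have := theta_term_bound h0 h1 ht
    linarith
  have hG0 : Filter.Tendsto (fun t : ℝ => ∑' n : ℤ, G t n) Filter.atTop (nhds 0) :=
    master _ _ T summable_cz hGbound
  have hmain : ∀ t : ℝ, T ≤ t →
      Complex.exp ((Real.pi:ℂ)*(t:ℂ)/4) * theta1 ((t:ℂ)*Complex.I) z =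
      -Complex.I * (Complex.exp (Real.pi*Complex.I*z) - Complex.exp (-(Real.pi*Complex.I*z)) +
        ∑' n : ℤ, G t n) := by
    intro t ht
    have hGsum : Summable (G t) :=
      Summable.of_norm_bounded (summable_cz.mul_right _) (hGbound t ht)
    have hF0 : F t 0 = Complex.exp (Real.pi*Complex.I*z) := by
      simp only [hF, hf, Int.cast_zero, zpow_zero, one_mul]
      rw [← mul_assoc, ← Complex.exp_add]
      have h : (Real.pi:ℂ)*(t:ℂ)/4 + Real.pi*Complex.I*((0:ℂ)+1/2)^2*((t:ℂ)*Complex.I) = 0 := by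
        linear_combination ((Real.pi:ℂ)*(t:ℂ)/4) * Complex.I_mul_I
      rw [h, Complex.exp_zero, one_mul]
      congr 1
      ring
    have hFm1 : F t (-1) = -Complex.exp (-(Real.pi*Complex.I*z)) := by
      simp only [hF, hf, Int.cast_neg, Int.cast_one]
      have hz1 : ((-1:ℂ))^(-1:ℤ) = -1 := by norm_num
      rw [hz1]
      have h2 : 2*(Real.pi:ℂ)*Complex.I*((-1:ℂ)+1/2)*z = -(Real.pi*Complex.I*z) := by ring
      rw [h2]
      have h3 : Complex.exp ((Real.pi:ℂ)*(t:ℂ)/4) *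
          (-1 * Complex.exp (Real.pi*Complex.I*((-1:ℂ)+1/2)^2*((t:ℂ)*Complex.I)) *
            Complex.exp (-(Real.pi*Complex.I*z))) =
          -(Complex.exp ((Real.pi:ℂ)*(t:ℂ)/4 +
              Real.pi*Complex.I*((-1:ℂ)+1/2)^2*((t:ℂ)*Complex.I)) *
            Complex.exp (-(Real.pi*Complex.I*z))) := by
        rw [Complex.exp_add]
        ring
      rw [h3]
      have h : (Real.pi:ℂ)*(t:ℂ)/4 + Real.pi*Complex.I*((-1:ℂ)+1/2)^2*((t:ℂ)*Complex.I) = 0 := by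
        linear_combination ((Real.pi:ℂ)*(t:ℂ)/4) * Complex.I_mul_I
      rw [h, Complex.exp_zero, one_mul]
    have hFsum : HasSum (F t) (F t 0 + F t (-1) + ∑' n : ℤ, G t n) := by
      have h01 : HasSum (fun n : ℤ =>
          (if n = 0 then F t 0 else 0) + (if n = (-1:ℤ) then F t (-1) else 0))
          (F t 0 + F t (-1)) := (hasSum_ite_eq 0 (F t 0)).add (hasSum_ite_eq (-1) (F t (-1)))
      have hadd := h01.add hGsum.hasSum
      have hfun : (fun n : ℤ => ((if n = 0 then F t 0 else 0) +
          (if n = (-1:ℤ) then F t (-1) else 0)) + G t n) = F t := by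
        funext n
        simp only [hG]
        by_cases h0 : n = 0
        · subst h0; norm_num
        by_cases h1 : n = -1
        · subst h1; norm_num
        simp [h0, h1]
      rwa [hfun] at hadd
    have htheta : theta1 ((t:ℂ)*Complex.I) z = -Complex.I * ∑' n : ℤ, f t n := rfl
    have hts : (∑' n : ℤ, F t n) = F t 0 + F t (-1) + ∑' n : ℤ, G t n := hFsum.tsum_eq
    have hmul : (∑' n : ℤ, F t n) =
        Complex.exp ((Real.pi:ℂ)*(t:ℂ)/4) * ∑' n : ℤ, f t n := tsum_mul_left
    rw [htheta]
    calc Complex.exp ((Real.pi:ℂ)*(t:ℂ)/4) * (-Complex.I * ∑' n : ℤ, f t n)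
        = -Complex.I * (Complex.exp ((Real.pi:ℂ)*(t:ℂ)/4) * ∑' n : ℤ, f t n) := by ring
      _ = -Complex.I * (F t 0 + F t (-1) + ∑' n : ℤ, G t n) := by rw [← hmul, hts]
      _ = -Complex.I * (Complex.exp (Real.pi*Complex.I*z) -
            Complex.exp (-(Real.pi*Complex.I*z)) + ∑' n : ℤ, G t n) := by
          rw [hF0, hFm1]
          ring
  have hlim : Filter.Tendsto (fun t : ℝ =>
      -Complex.I * (Complex.exp (Real.pi*Complex.I*z) - Complex.exp (-(Real.pi*Complex.I*z)) +
        ∑' n : ℤ, G t n)) Filter.atTop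
      (nhds (-Complex.I * (Complex.exp (Real.pi*Complex.I*z) -
        Complex.exp (-(Real.pi*Complex.I*z))))) := by
    have hcst : Filter.Tendsto (fun _ : ℝ => Complex.exp (Real.pi*Complex.I*z) -
        Complex.exp (-(Real.pi*Complex.I*z))) Filter.atTop
        (nhds (Complex.exp (Real.pi*Complex.I*z) - Complex.exp (-(Real.pi*Complex.I*z)))) :=
      tendsto_const_nhds
    have h := hcst.add hG0
    have h2 := h.const_mul (-Complex.I)
    simpa using h2
  apply hlim.congr'
  filter_upwards [eventually_ge_atTop T] with t ht
  exact (hmain t ht).symm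

/-- The q⁰-coefficient of E₆·φ_{-2,1}³ is y⁻³ - 6y⁻² + 15y⁻¹ - 20 + 15y - 6y² + y³. -/
theorem E6_phim21_cube_q0_coefficient (z : ℂ) :
    Filter.Tendsto
      (fun t : ℝ => E6 ((t : ℂ) * Complex.I) * phim21 ((t : ℂ) * Complex.I) z ^ 3)
      Filter.atTop
      (nhds ((Complex.exp (2 * Real.pi * Complex.I * z))⁻¹ ^ 3 -
        6 * (Complex.exp (2 * Real.pi * Complex.I * z))⁻¹ ^ 2 +
        15 * (Complex.exp (2 * Real.pi * Complex.I * z))⁻¹ - 20 +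
        15 * Complex.exp (2 * Real.pi * Complex.I * z) -
        6 * Complex.exp (2 * Real.pi * Complex.I * z) ^ 2 +
        Complex.exp (2 * Real.pi * Complex.I * z) ^ 3)) := by
  have hw : Complex.exp (Real.pi*Complex.I*z) ≠ 0 := Complex.exp_ne_zero _
  have hA := theta_tendsto z
  rw [Complex.exp_neg] at hA
  have hB := eta_prod_tendsto
  have hE := E6_tendsto
  have hkey : Filter.Tendsto (fun t : ℝ => E6 ((t:ℂ)*Complex.I) *
      (-(Complex.exp ((Real.pi:ℂ)*(t:ℂ)/4) * theta1 ((t:ℂ)*Complex.I) z)^2 /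
        (∏' n : ℕ, (1 - Complex.exp (2*Real.pi*Complex.I*((n:ℂ)+1)*((t:ℂ)*Complex.I))))^6)^3)
      Filter.atTop
      (nhds (1 * (-(-Complex.I * (Complex.exp (Real.pi*Complex.I*z) -
        (Complex.exp (Real.pi*Complex.I*z))⁻¹))^2 / (1:ℂ)^6)^3)) := by
    exact hE.mul ((((hA.pow 2).neg).div (hB.pow 6) (by norm_num)).pow 3)
  have hid : ∀ t : ℝ, E6 ((t:ℂ)*Complex.I) *
      (-(Complex.exp ((Real.pi:ℂ)*(t:ℂ)/4) * theta1 ((t:ℂ)*Complex.I) z)^2 /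
        (∏' n : ℕ, (1 - Complex.exp (2*Real.pi*Complex.I*((n:ℂ)+1)*((t:ℂ)*Complex.I))))^6)^3 =
      E6 ((t:ℂ)*Complex.I) * phim21 ((t:ℂ)*Complex.I) z ^ 3 := by
    intro t
    congr 2
    simp only [phim21, dedekindEta]
    set P := ∏' n : ℕ, (1 - Complex.exp (2*Real.pi*Complex.I*((n:ℂ)+1)*((t:ℂ)*Complex.I))) with hP
    set θ := theta1 ((t:ℂ)*Complex.I) z with hθ
    have he6 : (Complex.exp (Real.pi*Complex.I*((t:ℂ)*Complex.I)/12))^6 =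
        Complex.exp (-((Real.pi:ℂ)*(t:ℂ)/2)) := by
      rw [← Complex.exp_nat_mul]
      congr 1
      push_cast
      linear_combination ((Real.pi:ℂ)*(t:ℂ)/2) * Complex.I_mul_I
    conv_rhs => rw [mul_pow, he6]
    have hsq : Complex.exp ((Real.pi:ℂ)*(t:ℂ)/4)^2 = Complex.exp ((Real.pi:ℂ)*(t:ℂ)/2) := by
      rw [← Complex.exp_nat_mul]
      congr 1
      ring
    calc -(Complex.exp ((Real.pi:ℂ)*(t:ℂ)/4) * θ)^2 / P^6
        = (Complex.exp ((Real.pi:ℂ)*(t:ℂ)/2) * -θ^2) / P^6 := by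
          rw [mul_pow, hsq]
          ring_nf
      _ = (Complex.exp ((Real.pi:ℂ)*(t:ℂ)/2) * -θ^2) /
            (Complex.exp ((Real.pi:ℂ)*(t:ℂ)/2) * (Complex.exp (-((Real.pi:ℂ)*(t:ℂ)/2)) * P^6)) := by
          congr 1
          rw [← mul_assoc, ← Complex.exp_add]
          norm_num
      _ = -θ^2 / (Complex.exp (-((Real.pi:ℂ)*(t:ℂ)/2)) * P^6) :=
          mul_div_mul_left _ _ (Complex.exp_ne_zero _)
  have hfinal := hkey.congr hid
  have hval : (1:ℂ) * (-(-Complex.I * (Complex.exp (Real.pi*Complex.I*z) -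
      (Complex.exp (Real.pi*Complex.I*z))⁻¹))^2 / (1:ℂ)^6)^3 =
      (Complex.exp (2 * Real.pi * Complex.I * z))⁻¹ ^ 3 -
        6 * (Complex.exp (2 * Real.pi * Complex.I * z))⁻¹ ^ 2 +
        15 * (Complex.exp (2 * Real.pi * Complex.I * z))⁻¹ - 20 +
        15 * Complex.exp (2 * Real.pi * Complex.I * z) -
        6 * Complex.exp (2 * Real.pi * Complex.I * z) ^ 2 +
        Complex.exp (2 * Real.pi * Complex.I * z) ^ 3 := by
    have hy : Complex.exp (2 * Real.pi * Complex.I * z) =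
        Complex.exp (Real.pi*Complex.I*z)^2 := by
      rw [sq, ← Complex.exp_add]
      congr 1
      ring
    rw [hy]
    have hIsq : (-(-Complex.I * (Complex.exp (Real.pi*Complex.I*z) -
        (Complex.exp (Real.pi*Complex.I*z))⁻¹))^2) =
        (Complex.exp (Real.pi*Complex.I*z) - (Complex.exp (Real.pi*Complex.I*z))⁻¹)^2 := by
      linear_combination (-(Complex.exp (Real.pi*Complex.I*z) -
        (Complex.exp (Real.pi*Complex.I*z))⁻¹)^2) * Complex.I_sq
    rw [hIsq]
    field_simp
    ring
  rwa [hval] at hfinal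
end
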